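/- arXiv:0807.3461 — 9 statements merged into one kernel-verified Lean document; each statement's English description precedes it below -/
import Mathlib

section
/- Every additive basis has only finitely many essential subsets; that is, if A ⊆ ℤ is an additive basis, then the collection of essential subsets of A is finite. -/
set_option maxHeartbeats 1000000

open scoped BigOperators

/-- `A` represents every sufficiently large integer as a sum of `h` of its elements
(repetitions allowed). -/
def RepresentsWith (A : Set ℤ) (h : ℕ) : Prop :=
  ∃ N : ℤ, ∀ n : ℤ, N ≤ n → ∃ f : Fin h → ℤ, (∀ i, f i ∈ A) ∧ (∑ i, f i) = n

/-- `A ⊆ ℤ` is an additive basis: it has finite intersection with the negative integers and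
there is an `h` such that every sufficiently large integer is a sum of `h` elements of `A`. -/
def IsAdditiveBasis (A : Set ℤ) : Prop :=
  (A ∩ {x : ℤ | x < 0}).Finite ∧ ∃ h : ℕ, RepresentsWith A h

/-- `P` is an essentiality of `A`: `P ⊆ A`, `A \ P` is not a basis, and `P` is minimal
for inclusion with this property. -/
def IsEssentiality (A P : Set ℤ) : Prop :=
  P ⊆ A ∧ ¬ IsAdditiveBasis (A \ P) ∧ ∀ Q : Set ℤ, Q ⊂ P → IsAdditiveBasis (A \ Q)

/-- `P` is an essential subset of `A`: a finite essentiality. -/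
def IsEssentialSubset (A P : Set ℤ) : Prop :=
  IsEssentiality A P ∧ P.Finite

open scoped Pointwise

/-- exact representation with `k` elements of `S` summing to `v`. -/
def ERep (S : Set ℤ) (k : ℕ) (v : ℤ) : Prop :=
  ∃ f : Fin k → ℤ, (∀ t, f t ∈ S) ∧ (∑ t, f t) = v

namespace ERep

theorem zero (S : Set ℤ) : ERep S 0 0 :=
  ⟨fun t => 0, fun t => t.elim0, by simp⟩

theorem single {S : Set ℤ} {x : ℤ} (hx : x ∈ S) : ERep S 1 x :=
  ⟨fun _ => x, fun _ => hx, by simp⟩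

theorem add {S : Set ℤ} {a b : ℕ} {v w : ℤ} (h1 : ERep S a v) (h2 : ERep S b w) :
    ERep S (a + b) (v + w) := by
  obtain ⟨f, hf, hfs⟩ := h1
  obtain ⟨g, hg, hgs⟩ := h2
  refine ⟨Fin.addCases f g, fun t => ?_, ?_⟩
  · refine Fin.addCases (fun i => ?_) (fun i => ?_) t
    · simpa using hf i
    · simpa using hg i
  · rw [Fin.sum_univ_add]
    simp [hfs, hgs]

theorem cast {S : Set ℤ} {a b : ℕ} {v : ℤ} (hab : a = b) (h : ERep S a v) : ERep S b v := by
  subst hab; exact h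

theorem nsmul {S : Set ℤ} {a : ℕ} {v : ℤ} (h : ERep S a v) (m : ℕ) :
    ERep S (m * a) ((m : ℤ) * v) := by
  induction m with
  | zero => simpa using ERep.zero S
  | succ m ih =>
      have := ih.add h
      refine this.cast (by ring) |>.imp ?_
      intro f hf
      refine ⟨hf.1, ?_⟩
      rw [hf.2]; push_cast; ring

theorem of_finset {S : Set ℤ} {ι : Type*} (σ : Finset ι) (f : ι → ℤ)
    (hf : ∀ t ∈ σ, f t ∈ S) : ERep S σ.card (∑ t ∈ σ, f t) := by
  classical
  induction σ using Finset.induction_on with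
  | empty => simpa using ERep.zero S
  | @insert a s ha ih =>
      have h1 : ERep S 1 (f a) := single (hf a (Finset.mem_insert_self a s))
      have h2 := ih (fun t ht => hf t (Finset.mem_insert_of_mem ht))
      have := h1.add h2
      rw [Finset.card_insert_of_notMem ha, Finset.sum_insert ha]
      exact this.cast (by ring)

end ERep

/-- A basis is an infinite set. -/
theorem basis_infinite {A : Set ℤ} (hA : IsAdditiveBasis A) : A.Infinite := by
  rintro hfin
  obtain ⟨-, h, N, hrep⟩ := hA
  obtain ⟨K, hK0, hK⟩ : ∃ K : ℤ, 0 ≤ K ∧ ∀ a ∈ A, |a| ≤ K := by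
    obtain ⟨K, hK⟩ := (hfin.image (fun a => |a|)).bddAbove
    exact ⟨max K 0, le_max_right _ _, fun a ha =>
      le_trans (hK ⟨a, ha, rfl⟩) (le_max_left _ _)⟩
  set n := max N ((h : ℤ) * K + 1) with hn
  obtain ⟨f, hf, hfs⟩ := hrep n (le_max_left _ _)
  have hb : |∑ t, f t| ≤ (h : ℤ) * K := by
    calc |∑ t, f t| ≤ ∑ t, |f t| := Finset.abs_sum_le_sum_abs _ _
    _ ≤ ∑ _t : Fin h, K := Finset.sum_le_sum (fun t _ => hK _ (hf t))
    _ = (h : ℤ) * K := by simp [mul_comm]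
  rw [hfs] at hb
  have : (h : ℤ) * K + 1 ≤ n := le_max_right _ _
  have : (h:ℤ) * K + 1 ≤ |n| := le_trans this (le_abs_self n)
  omega

/-- Elements of a basis are bounded below. -/
theorem basis_bddBelow {A : Set ℤ} (hA : IsAdditiveBasis A) :
    ∃ M : ℤ, ∀ a ∈ A, -M ≤ a := by
  obtain ⟨hneg, -⟩ := hA
  obtain ⟨K, hK⟩ := hneg.bddBelow
  refine ⟨-(min K 0), fun a ha => ?_⟩
  rcases lt_or_ge a 0 with h | h
  · have := hK ⟨ha, h⟩
    simp only [neg_neg]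
    exact le_trans (min_le_left _ _) this
  · simp only [neg_neg]
    exact le_trans (min_le_right _ _) h

/-- An infinite subset of ℤ bounded below is unbounded above. -/
theorem unbounded_above {S : Set ℤ} (hS : S.Infinite) {M : ℤ} (hM : ∀ a ∈ S, -M ≤ a) :
    ∀ U : ℤ, ∃ a ∈ S, U ≤ a := by
  intro U
  by_contra hcon
  push_neg at hcon
  exact hS <| (Set.finite_Ico (-M) U).subset (fun a ha => ⟨hM a ha, hcon a ha⟩)

/-- A set contained in a single congruence class mod `d ≥ 2` is not a basis. -/
theorem subclass_not_basis {S : Set ℤ} {d : ℕ} (hd : 2 ≤ d) {x₀ : ℤ}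
    (hall : ∀ x ∈ S, (d : ℤ) ∣ x - x₀) : ¬ IsAdditiveBasis S := by
  rintro ⟨-, h, N, hrep⟩
  obtain ⟨f, hf, hfs⟩ := hrep N le_rfl
  obtain ⟨g, hg, hgs⟩ := hrep (N + 1) (by omega)
  have key : ∀ (F : Fin h → ℤ), (∀ t, F t ∈ S) → (d : ℤ) ∣ (∑ t, F t) - (h : ℤ) * x₀ := by
    intro F hF
    have : (∑ t, F t) - (h : ℤ) * x₀ = ∑ t, (F t - x₀) := by
      rw [Finset.sum_sub_distrib]; simp [mul_comm]
    rw [this]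
    exact Finset.dvd_sum (fun t _ => hall _ (hF t))
  have h1 := key f hf
  have h2 := key g hg
  rw [hfs] at h1; rw [hgs] at h2
  have : (d : ℤ) ∣ 1 := by
    have := dvd_sub h2 h1
    simpa using this
  have := Int.le_of_dvd one_pos this
  omega

/-- all sums of at most `k` elements (with repetition) from `s`. -/
def sumsUpTo (s : Finset ℤ) : ℕ → Finset ℤ
  | 0 => {0}
  | (k+1) => sumsUpTo s k ∪ (s + sumsUpTo s k)

theorem sumsUpTo_card (s : Finset ℤ) (k : ℕ) : (sumsUpTo s k).card ≤ (s.card + 1) ^ k := by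
  induction k with
  | zero => simp [sumsUpTo]
  | succ k ih =>
      calc (sumsUpTo s (k+1)).card ≤ (sumsUpTo s k).card + (s + sumsUpTo s k).card :=
            Finset.card_union_le _ _
      _ ≤ (sumsUpTo s k).card + s.card * (sumsUpTo s k).card := by
            have := Finset.card_image₂_le (· + ·) s (sumsUpTo s k)
            exact Nat.add_le_add_left this _
      _ = (s.card + 1) * (sumsUpTo s k).card := by ring
      _ ≤ (s.card + 1) * (s.card + 1) ^ k := by
            exact Nat.mul_le_mul_left _ ih
      _ = (s.card + 1) ^ (k + 1) := by ring

theorem sumsUpTo_mono (s : Finset ℤ) {k l : ℕ} (h : k ≤ l) :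
    sumsUpTo s k ⊆ sumsUpTo s l := by
  induction l with
  | zero => simpa [Nat.le_zero.mp h]
  | succ l ih =>
      rcases Nat.eq_or_lt_of_le h with rfl | h'
      · exact subset_rfl
      · exact (ih (by omega)).trans (Finset.subset_union_left)

theorem zero_mem_sumsUpTo (s : Finset ℤ) (k : ℕ) : (0 : ℤ) ∈ sumsUpTo s k :=
  sumsUpTo_mono s (Nat.zero_le k) (by simp [sumsUpTo])

theorem sum_mem_sumsUpTo {s : Finset ℤ} {ι : Type*} (σ : Finset ι) (f : ι → ℤ) (k : ℕ)
    (hcard : σ.card ≤ k) (hf : ∀ t ∈ σ, f t ∈ s) : (∑ t ∈ σ, f t) ∈ sumsUpTo s k := by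
  classical
  induction k generalizing σ with
  | zero =>
      have : σ = ∅ := Finset.card_eq_zero.mp (Nat.le_zero.mp hcard)
      subst this; simp [sumsUpTo]
  | succ k ih =>
      rcases Finset.eq_empty_or_nonempty σ with rfl | ⟨a, ha⟩
      · simpa using zero_mem_sumsUpTo s (k+1)
      · have hσ : σ = insert a (σ.erase a) := (Finset.insert_erase ha).symm
        rw [hσ, Finset.sum_insert (Finset.notMem_erase a σ)]
        have hc : (σ.erase a).card ≤ k := by
          have := Finset.card_erase_of_mem ha
          omega
        have hmem := ih (σ.erase a) hc (fun t ht => hf t (Finset.mem_of_mem_erase ht))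
        exact Finset.subset_union_right <|
          Finset.add_mem_add (hf a ha) hmem

section Reach

variable (B : Set ℤ) (b₀ : ℤ)

/-- `v` is an integer combination of elements `z - b₀`, `z ∈ B`. -/
def Reach (v : ℤ) : Prop :=
  ∃ l : List (ℤ × ℤ), (∀ p ∈ l, p.1 ∈ B) ∧ (l.map (fun p => p.2 * (p.1 - b₀))).sum = v

variable {B b₀}

theorem reach_single {z : ℤ} (hz : z ∈ B) : Reach B b₀ (z - b₀) :=
  ⟨[(z, 1)], by simpa using hz, by simp⟩

theorem reach_comb {a b : ℤ} (ha : Reach B b₀ a) (hb : Reach B b₀ b) (c : ℤ) :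
    Reach B b₀ (a + c * b) := by
  obtain ⟨l1, hl1, hs1⟩ := ha
  obtain ⟨l2, hl2, hs2⟩ := hb
  refine ⟨l1 ++ l2.map (fun p => (p.1, c * p.2)), ?_, ?_⟩
  · intro p hp
    rcases List.mem_append.mp hp with h | h
    · exact hl1 p h
    · obtain ⟨q, hq, rfl⟩ := List.mem_map.mp h
      exact hl2 q hq
  · rw [List.map_append, List.sum_append, hs1]
    congr 1
    rw [List.map_map]
    rw [← hs2, ← List.sum_map_mul_left]
    congr 1
    ext p
    simp [mul_assoc]

end Reach

/-- Frobenius-type lemma: if `u⁻ ≥ 0` and `u⁺ = u⁻ + 1`, every `w ≥ u⁺ * u⁻` is a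
nonnegative combination `x * u⁺ + y * u⁻` with `x + y ≤ w`. -/
theorem frob {um : ℤ} (hum : 0 ≤ um) {w : ℤ} (hw : (um + 1) * um ≤ w) :
    ∃ x y : ℕ, (x : ℤ) * (um + 1) + (y : ℤ) * um = w ∧ (x : ℤ) + (y : ℤ) ≤ w := by
  rcases eq_or_lt_of_le hum with heq | hpos
  · -- um = 0, u⁺ = 1
    have hw0 : 0 ≤ w := by nlinarith
    refine ⟨w.toNat, 0, ?_, ?_⟩ <;>
      simp [Int.toNat_of_nonneg hw0, ← heq]
  · set x : ℤ := w % um with hx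
    have hx0 : 0 ≤ x := Int.emod_nonneg w (by omega)
    have hxlt : x < um := Int.emod_lt_of_pos w hpos
    have hdvd : um ∣ w - x := Int.dvd_self_sub_of_emod_eq rfl
    have hdvd2 : um ∣ w - x * (um + 1) := by
      have h2 : w - x * (um + 1) = (w - x) - x * um := by ring
      rw [h2]
      exact dvd_sub hdvd ⟨x, mul_comm x um⟩
    set y : ℤ := (w - x * (um + 1)) / um with hy
    have hge : 0 ≤ w - x * (um + 1) := by nlinarith
    have hyum : y * um = w - x * (um + 1) := Int.ediv_mul_cancel hdvd2
    have hy0 : 0 ≤ y := Int.ediv_nonneg hge (by omega)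
    refine ⟨x.toNat, y.toNat, ?_, ?_⟩
    · rw [Int.toNat_of_nonneg hx0, Int.toNat_of_nonneg hy0]
      nlinarith
    · rw [Int.toNat_of_nonneg hx0, Int.toNat_of_nonneg hy0]
      nlinarith

theorem ERep.congr {S : Set ℤ} {k : ℕ} {v w : ℤ} (h : ERep S k v) (e : v = w) :
    ERep S k w := e ▸ h

theorem list_toNat_split (b₀ : ℤ) (l : List (ℤ × ℤ)) :
    (l.map fun p => ((p.2.toNat : ℤ) * (p.1 - b₀))).sum
      - ((l.map (fun p => (p.1, -p.2))).map fun p => ((p.2.toNat : ℤ) * (p.1 - b₀))).sum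
      = (l.map (fun p => p.2 * (p.1 - b₀))).sum := by
  induction l with
  | nil => simp
  | cons p t ih =>
      simp only [List.map_cons, List.sum_cons]
      have h1 : ((p.2.toNat : ℤ)) - (((-p.2).toNat : ℤ)) = p.2 := Int.toNat_sub_toNat_neg p.2
      linear_combination (p.1 - b₀) * h1 + ih

/-- Erdős–Graham type theorem: removing a finite subset whose complement has
coprime differences preserves being an additive basis. -/
theorem eg {A : Set ℤ} (hA : IsAdditiveBasis A) {P : Set ℤ} (hPfin : P.Finite) (_hPA : P ⊆ A)
    (hnd : ∀ d : ℕ, 2 ≤ d → ∃ x ∈ A \ P, ∃ y ∈ A \ P, ¬ (d : ℤ) ∣ x - y) :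
    IsAdditiveBasis (A \ P) := by
  classical
  set B : Set ℤ := A \ P with hB
  have hBinf : B.Infinite := (basis_infinite hA).diff hPfin
  obtain ⟨M, hM⟩ := basis_bddBelow hA
  have hMB : ∀ a ∈ B, -M ≤ a := fun a ha => hM a ha.1
  -- least element b₀ of B
  obtain ⟨b₀, hb₀B, hb₀min⟩ :=
    Int.exists_least_of_bdd (P := (· ∈ B)) ⟨-M, fun z hz => hMB z hz⟩ hBinf.nonempty
  have hnn : ∀ z ∈ B, 0 ≤ z - b₀ := fun z hz => by have := hb₀min z hz; omega
  -- least positive reachable number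
  have hex : ∃ n : ℕ, 0 < n ∧ Reach B b₀ (n : ℤ) := by
    obtain ⟨z, hzB, hzne⟩ : ∃ z ∈ B, z ≠ b₀ := by
      obtain ⟨z, hz⟩ := (hBinf.diff (Set.finite_singleton b₀)).nonempty
      exact ⟨z, hz.1, by simpa using hz.2⟩
    refine ⟨(z - b₀).toNat, ?_, ?_⟩
    · have := hnn z hzB; omega
    · have h1 : ((z - b₀).toNat : ℤ) = z - b₀ := Int.toNat_of_nonneg (hnn z hzB)
      rw [h1]; exact reach_single hzB
  set g : ℕ := Nat.find hex with hgdef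
  obtain ⟨hgpos, hgreach⟩ : 0 < g ∧ Reach B b₀ (g : ℤ) := Nat.find_spec hex
  have hgmin : ∀ m : ℕ, m < g → ¬ (0 < m ∧ Reach B b₀ (m : ℤ)) := fun m hm => Nat.find_min hex hm
  have hdvd : ∀ z ∈ B, (g : ℤ) ∣ z - b₀ := by
    intro z hz
    set s : ℤ := (z - b₀) % (g : ℤ) with hs
    have hs0 : 0 ≤ s := Int.emod_nonneg _ (by exact_mod_cast hgpos.ne')
    have hslt : s < (g : ℤ) := Int.emod_lt_of_pos _ (by exact_mod_cast hgpos)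
    have hreach_s : Reach B b₀ s := by
      have h1 : s = (z - b₀) + (-((z - b₀) / (g : ℤ))) * (g : ℤ) := by
        rw [hs]; rw [Int.emod_def]; ring
      rw [h1]
      exact reach_comb (reach_single hz) hgreach _
    by_contra hnd2
    have hsne : s ≠ 0 := fun h0 => hnd2 (Int.dvd_of_emod_eq_zero h0)
    have hspos : 0 < s := lt_of_le_of_ne hs0 (Ne.symm hsne)
    have := hgmin s.toNat (by omega)
    apply this
    constructor
    · omega
    · have : ((s.toNat : ℤ)) = s := Int.toNat_of_nonneg hs0
      rw [this]; exact hreach_s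
  -- g = 1
  have hg1 : g = 1 := by
    by_contra hg1
    have hg2 : 2 ≤ g := by omega
    obtain ⟨x, hx, y, hy, hxy⟩ := hnd g hg2
    exact hxy (by
      have h1 := hdvd x hx
      have h2 := hdvd y hy
      have : x - y = (x - b₀) - (y - b₀) := by ring
      rw [this]; exact dvd_sub h1 h2)
  -- combination data
  obtain ⟨l, hlmem, hlsum⟩ : Reach B b₀ 1 := by rw [hg1] at hgreach; exact_mod_cast hgreach
  -- Pat
  set Pat : ℕ → ℤ → Prop := fun k v => ERep B k ((k : ℤ) * b₀ + v) with hPat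
  have pat_zero : Pat 0 0 := (ERep.zero B).congr (by simp)
  have pat_z : ∀ z ∈ B, Pat 1 (z - b₀) := fun z hz => (ERep.single hz).congr (by ring)
  have pat_add : ∀ {k l : ℕ} {v w : ℤ}, Pat k v → Pat l w → Pat (k + l) (v + w) := by
    intro k l v w h1 h2
    exact (h1.add h2).congr (by push_cast; ring)
  have pat_nsmul : ∀ {k : ℕ} {v : ℤ} (_ : Pat k v) (m : ℕ), Pat (m * k) ((m : ℤ) * v) := by
    intro k v h m
    exact (h.nsmul m).congr (by push_cast; ring)
  have pat_cast : ∀ {a b : ℕ} {v : ℤ}, a = b → Pat a v → Pat b v := by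
    intro a b v e h; exact e ▸ h
  have pat_pad : ∀ {k K : ℕ} {v : ℤ}, Pat k v → k ≤ K → Pat K v := by
    intro k K v h hkK
    have hpad : Pat ((K - k) * 1) (((K - k : ℕ) : ℤ) * 0) := pat_nsmul (pat_z b₀ hb₀B |>.congr (by ring)) (K - k)
    have := pat_add h hpad
    have h2 : Pat (k + (K - k) * 1) (v + ((K - k : ℕ) : ℤ) * 0) := this
    have h3 : Pat (k + (K - k) * 1) v := by
      refine pat_cast rfl (h2.congr ?_); push_cast; ring
    exact pat_cast (by omega) h3
  -- Pat representation of list combinations with nonnegative coefficients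
  have pat_list : ∀ l' : List (ℤ × ℤ), (∀ p ∈ l', p.1 ∈ B) →
      Pat ((l'.map fun p => p.2.toNat).sum)
        ((l'.map fun p => ((p.2.toNat : ℤ) * (p.1 - b₀))).sum) := by
    intro l' hl'
    induction l' with
    | nil => simpa using pat_zero
    | cons p t ih =>
        have hp : p.1 ∈ B := hl' p List.mem_cons_self
        have ht := ih (fun q hq => hl' q (List.mem_cons_of_mem p hq))
        have h1 : Pat (p.2.toNat * 1) ((p.2.toNat : ℤ) * (p.1 - b₀)) :=
          pat_nsmul (pat_z p.1 hp) p.2.toNat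
        have h2 := pat_add (pat_cast (mul_one _) h1) ht
        simpa using h2
  -- the numbers u⁺ and u⁻
  set Kp : ℕ := (l.map fun p => p.2.toNat).sum with hKp
  set up : ℤ := (l.map fun p => ((p.2.toNat : ℤ) * (p.1 - b₀))).sum with hup
  set lneg : List (ℤ × ℤ) := l.map (fun p => (p.1, -p.2)) with hlneg
  have hlnegmem : ∀ p ∈ lneg, p.1 ∈ B := by
    intro p hp
    obtain ⟨q, hq, rfl⟩ := List.mem_map.mp hp
    exact hlmem q hq
  set Km : ℕ := (lneg.map fun p => p.2.toNat).sum with hKm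
  set um : ℤ := (lneg.map fun p => ((p.2.toNat : ℤ) * (p.1 - b₀))).sum with hum
  have pat_up : Pat Kp up := pat_list l hlmem
  have pat_um : Pat Km um := pat_list lneg hlnegmem
  have hdiff : up - um = 1 := by
    rw [hup, hum, hlneg, list_toNat_split b₀ l, hlsum]
  have hum0 : 0 ≤ um := by
    rw [hum]
    apply List.sum_nonneg
    intro x hx
    obtain ⟨q, hq, rfl⟩ := List.mem_map.mp hx
    have := hnn q.1 (hlnegmem q hq)
    positivity
  -- bound for removed elements
  obtain ⟨W₁, hW₁0, hW₁⟩ : ∃ W₁ : ℤ, 0 ≤ W₁ ∧ ∀ a ∈ P, |a - b₀| ≤ W₁ := by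
    obtain ⟨K, hK⟩ := (hPfin.image (fun a => |a - b₀|)).bddAbove
    exact ⟨max K 0, le_max_right _ _, fun a ha =>
      le_trans (hK ⟨a, ha, rfl⟩) (le_max_left _ _)⟩
  obtain ⟨h, N, hrep⟩ := hA.2
  set C₀ : ℤ := (um + 1) * um with hC₀
  have hC₀0 : 0 ≤ C₀ := by positivity
  obtain ⟨bs, hbsB, hbsge⟩ := unbounded_above hBinf hMB (b₀ + (C₀ + (h : ℤ) * W₁))
  set Wmax : ℤ := (h : ℤ) * W₁ + (bs - b₀) with hWmax
  have hWmax0 : 0 ≤ Wmax := by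
    have : 0 ≤ (h : ℤ) * W₁ := by positivity
    omega
  set Km' : ℕ := max Kp Km with hKm'
  set L₀ : ℕ := (Wmax * (Km' : ℤ)).toNat + 1 with hL₀
  -- representability of all intermediate targets
  have hrepw : ∀ w : ℤ, C₀ ≤ w → w ≤ Wmax → ∃ k : ℕ, k ≤ L₀ ∧ Pat k w := by
    intro w hw1 hw2
    obtain ⟨x, y, hxy, hxysum⟩ := frob hum0 (show (um+1)*um ≤ w by rw [hC₀] at hw1; exact hw1)
    refine ⟨x * Kp + y * Km, ?_, ?_⟩
    · have h1 : ((x * Kp + y * Km : ℕ) : ℤ) ≤ Wmax * (Km' : ℤ) := by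
        have hKpK : (Kp : ℤ) ≤ (Km' : ℤ) := by exact_mod_cast Nat.le_max_left Kp Km
        have hKmK : (Km : ℤ) ≤ (Km' : ℤ) := by exact_mod_cast Nat.le_max_right Kp Km
        have hx0 : (0:ℤ) ≤ (x:ℤ) := by positivity
        have hy0 : (0:ℤ) ≤ (y:ℤ) := by positivity
        have hK0 : (0:ℤ) ≤ (Km':ℤ) := by positivity
        have h2 : ((x * Kp + y * Km : ℕ) : ℤ) = (x:ℤ) * Kp + (y:ℤ) * Km := by push_cast; ring
        rw [h2]
        have h3 : (x:ℤ) * Kp + (y:ℤ) * Km ≤ ((x:ℤ) + (y:ℤ)) * (Km':ℤ) := by nlinarith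
        have h4 : ((x:ℤ) + (y:ℤ)) * (Km':ℤ) ≤ Wmax * (Km':ℤ) := by nlinarith [hxysum, hw2, hK0]
        omega
      omega
    · have hup1 : up = um + 1 := by omega
      have p1 : Pat (x * Kp) ((x : ℤ) * up) := pat_nsmul pat_up x
      have p2 : Pat (y * Km) ((y : ℤ) * um) := pat_nsmul pat_um y
      have := pat_add p1 p2
      refine pat_cast rfl (this.congr ?_)
      rw [hup1]
      push_cast
      linear_combination hxy
  -- final assembly
  constructor
  · exact hA.1.subset (fun x hx => ⟨hx.1.1, hx.2⟩)
  refine ⟨L₀ + h, N + (L₀ : ℤ) * b₀ + (bs - b₀), fun n hn => ?_⟩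
  set n' : ℤ := n - (L₀ : ℤ) * b₀ - (bs - b₀) with hn'
  obtain ⟨f, hf, hfs⟩ := hrep n' (by omega)
  set S : Finset (Fin h) := Finset.univ.filter (fun t => f t ∈ P) with hS
  set m : ℕ := S.card with hm
  have hmh : m ≤ h := by
    have := Finset.card_filter_le Finset.univ (fun t => f t ∈ P)
    simpa using this
  set Φ : ℤ := ∑ t ∈ S, f t with hΦ
  have hsplit := Finset.sum_filter_add_sum_filter_not Finset.univ (fun t => f t ∈ P) f
  rw [hfs] at hsplit
  have hrest : ∑ t ∈ Finset.univ.filter (fun t => ¬ f t ∈ P), f t = n' - Φ := by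
    rw [hΦ, hS]
    linarith [hsplit]
  have hcompl : Finset.univ.filter (fun t => ¬ f t ∈ P) = Sᶜ := by
    rw [hS]; ext t; simp
  have hrestcard : (Finset.univ.filter (fun t => ¬ f t ∈ P)).card = h - m := by
    rw [hcompl, Finset.card_compl, hm]
    simp
  have hErest : ERep B (h - m) (n' - Φ) := by
    have hmem : ∀ t ∈ Finset.univ.filter (fun t => ¬ f t ∈ P), f t ∈ B := by
      intro t ht
      rw [hB]
      exact ⟨hf t, (Finset.mem_filter.mp ht).2⟩
    have := ERep.of_finset (Finset.univ.filter (fun t => ¬ f t ∈ P)) f hmem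
    rw [hrest, hrestcard] at this
    exact this
  -- bound the removed part
  have hΦb : |Φ - (m : ℤ) * b₀| ≤ (m : ℤ) * W₁ := by
    have h1 : Φ - (m : ℤ) * b₀ = ∑ t ∈ S, (f t - b₀) := by
      rw [Finset.sum_sub_distrib, hΦ, Finset.sum_const, hm]
      push_cast; ring
    rw [h1]
    calc |∑ t ∈ S, (f t - b₀)| ≤ ∑ t ∈ S, |f t - b₀| := Finset.abs_sum_le_sum_abs _ _
    _ ≤ S.card • W₁ := Finset.sum_le_card_nsmul _ _ _
        (fun t ht => hW₁ _ (Finset.mem_filter.mp ht).2)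
    _ = (m : ℤ) * W₁ := by rw [← hm]; push_cast [nsmul_eq_mul]; ring
  have hmW : (m : ℤ) * W₁ ≤ (h : ℤ) * W₁ := by
    have : (m : ℤ) ≤ (h : ℤ) := by exact_mod_cast hmh
    nlinarith
  obtain ⟨w, hw⟩ : ∃ w : ℤ, w = (Φ - (m : ℤ) * b₀) + (bs - b₀) := ⟨_, rfl⟩
  have hw1 : C₀ ≤ w := by
    have h1 := (abs_le.mp hΦb).1
    rw [hw]
    linarith
  have hw2 : w ≤ Wmax := by
    have h1 := (abs_le.mp hΦb).2
    rw [hw, hWmax]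
    linarith
  obtain ⟨k, hkL, hPk⟩ := hrepw w hw1 hw2
  have hPk2 : Pat (L₀ + m) w := pat_pad hPk (by omega)
  have hfinal := hPk2.add hErest
  have hval : ((L₀ + m : ℕ) : ℤ) * b₀ + w + (n' - Φ) = n := by
    rw [hw, hn']
    push_cast
    ring
  have : ERep B (L₀ + h) n := (hfinal.congr hval).cast (by omega)
  exact this

/-- the small elements of `A` below `T` (and at least `-M`). -/
noncomputable def smalls (A : Set ℤ) (M T : ℤ) : Finset ℤ :=
  ((Set.finite_Ico (-M) T).subset (Set.inter_subset_right (s := A))).toFinset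

theorem mem_smalls {A : Set ℤ} {M T x : ℤ} :
    x ∈ smalls A M T ↔ x ∈ A ∧ -M ≤ x ∧ x < T := by
  simp [smalls, Set.Finite.mem_toFinset, Set.mem_Ico, and_assoc]

/-- possible residues `σ + j * e` of a representation avoiding a window. -/
noncomputable def badSet (A : Set ℤ) (M : ℤ) (h : ℕ) (T e : ℤ) : Finset ℤ :=
  ((sumsUpTo (smalls A M T) h) ×ˢ (Finset.range (h+1))).image
    (fun pr => pr.1 + (pr.2 : ℤ) * e)

theorem badSet_card (A : Set ℤ) (M : ℤ) (h : ℕ) (T e : ℤ) :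
    (badSet A M h T e).card ≤ ((smalls A M T).card + 1) ^ h * (h + 1) := by
  calc (badSet A M h T e).card ≤ ((sumsUpTo (smalls A M T) h) ×ˢ (Finset.range (h+1))).card :=
        Finset.card_image_le
  _ = (sumsUpTo (smalls A M T) h).card * (h+1) := by rw [Finset.card_product, Finset.card_range]
  _ ≤ ((smalls A M T).card + 1) ^ h * (h + 1) :=
        Nat.mul_le_mul_right _ (sumsUpTo_card _ _)

theorem mem_badSet {A : Set ℤ} {M : ℤ} {h : ℕ} {T e σ : ℤ} {j : ℕ}
    (hσ : σ ∈ sumsUpTo (smalls A M T) h) (hj : j ≤ h) :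
    σ + (j : ℤ) * e ∈ badSet A M h T e := by
  refine Finset.mem_image.mpr ⟨(σ, j), ?_, rfl⟩
  exact Finset.mem_product.mpr ⟨hσ, Finset.mem_range.mpr (by omega)⟩

structure ChainLv where
  T : ℤ
  d : ℕ
  r : ℤ
  e : ℤ

/-- one admissible step of the chain construction. -/
def ChainStep (A : Set ℤ) (M : ℤ) (h : ℕ) (p q : ChainLv) : Prop :=
  p.d ∣ q.d ∧ 0 < q.d ∧ p.T < q.T ∧
  (∀ x ∈ A, ∀ y ∈ A, q.T ≤ x → q.T ≤ y → (q.d : ℤ) ∣ x - y) ∧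
  q.e ∈ A ∧ q.T ≤ q.e ∧
  ((p.d : ℤ) ∣ (q.r - p.r)) ∧
  (∀ c ∈ badSet A M h p.T q.e, ¬ ((q.d : ℤ) ∣ (q.r - c)))

theorem chainStep_exists {A : Set ℤ} {M : ℤ} (h : ℕ)
    (hAinf : A.Infinite) (hM : ∀ a ∈ A, -M ≤ a)
    (Hd : ∀ b : ℕ, ∃ T : ℤ, ∃ d : ℕ, b ≤ d ∧
      ∀ x ∈ A, ∀ y ∈ A, T ≤ x → T ≤ y → (d : ℤ) ∣ x - y)
    (p : ChainLv) (hp : 0 < p.d)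
    (hpInv : ∀ x ∈ A, ∀ y ∈ A, p.T ≤ x → p.T ≤ y → (p.d : ℤ) ∣ x - y) :
    ∃ q, ChainStep A M h p q := by
  classical
  set Z : ℕ := ((smalls A M p.T).card + 1) ^ h * (h + 1) with hZ
  obtain ⟨T', d', hd'ge, hd'cong⟩ := Hd (p.d * (Z + 1))
  have hd'pos : 0 < d' := by
    have : 0 < p.d * (Z + 1) := by positivity
    omega
  set D : ℕ := Nat.lcm p.d d' with hD
  have hdD : p.d ∣ D := Nat.dvd_lcm_left _ _
  have hd'D : d' ∣ D := Nat.dvd_lcm_right _ _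
  have hDpos : 0 < D := Nat.lcm_pos hp hd'pos
  have hDged' : d' ≤ D := Nat.le_of_dvd hDpos hd'D
  set K : ℕ := D / p.d with hK
  have hKD : K * p.d = D := Nat.div_mul_cancel hdD
  have hKgt : Z < K := by
    have h1 : p.d * (Z + 1) ≤ D := le_trans hd'ge hDged'
    nlinarith
  set T1 : ℤ := max p.T T' + 1 with hT1
  obtain ⟨e, heA, heT1⟩ := unbounded_above hAinf hM T1
  -- choose a good residue shift t
  have hgood : ∃ t ∈ Finset.range K,
      ¬ ∃ c ∈ badSet A M h p.T e, (D : ℤ) ∣ (p.r + (t : ℤ) * (p.d : ℤ) - c) := by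
    by_contra hcon
    push_neg at hcon
    have hsub : Finset.range K ⊆ (badSet A M h p.T e).biUnion
        (fun c => (Finset.range K).filter (fun t : ℕ => (D : ℤ) ∣ (p.r + (t : ℤ) * (p.d : ℤ) - c))) := by
      intro t ht
      obtain ⟨c, hc, hdvd⟩ := hcon t ht
      exact Finset.mem_biUnion.mpr ⟨c, hc, Finset.mem_filter.mpr ⟨ht, hdvd⟩⟩
    have hcard := Finset.card_le_card hsub
    rw [Finset.card_range] at hcard
    have hbound : ((badSet A M h p.T e).biUnion
        (fun c => (Finset.range K).filter (fun t : ℕ => (D : ℤ) ∣ (p.r + (t : ℤ) * (p.d : ℤ) - c)))).card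
        ≤ (badSet A M h p.T e).card * 1 := by
      refine le_trans (Finset.card_biUnion_le) ?_
      refine le_trans (Finset.sum_le_card_nsmul _ _ 1 ?_) (by simp)
      intro c _
      refine Finset.card_le_one.mpr ?_
      intro t1 ht1 t2 ht2
      have h1 := (Finset.mem_filter.mp ht1)
      have h2 := (Finset.mem_filter.mp ht2)
      have hdv : (D : ℤ) ∣ ((t1 : ℤ) - (t2 : ℤ)) * (p.d : ℤ) := by
        have := dvd_sub h1.2 h2.2
        have heq : (p.r + (t1 : ℤ) * (p.d : ℤ) - c) - (p.r + (t2 : ℤ) * (p.d : ℤ) - c)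
            = ((t1 : ℤ) - (t2 : ℤ)) * (p.d : ℤ) := by ring
        rw [heq] at this
        exact this
      have habs : |((t1 : ℤ) - (t2 : ℤ)) * (p.d : ℤ)| < (D : ℤ) := by
        have ht1' := Finset.mem_range.mp h1.1
        have ht2' := Finset.mem_range.mp h2.1
        rw [abs_mul]
        have hb1 : |(t1 : ℤ) - (t2 : ℤ)| < (K : ℤ) := by
          rw [abs_lt]; omega
        have hb2 : |(p.d : ℤ)| = (p.d : ℤ) := abs_of_nonneg (by positivity)
        rw [hb2]
        calc |(t1 : ℤ) - (t2 : ℤ)| * (p.d : ℤ) < (K : ℤ) * (p.d : ℤ) := by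
              apply mul_lt_mul_of_pos_right hb1 (by exact_mod_cast hp)
        _ = (D : ℤ) := by exact_mod_cast congrArg (Nat.cast : ℕ → ℤ) hKD
      have := Int.eq_zero_of_abs_lt_dvd hdv habs
      have hpd : (p.d : ℤ) ≠ 0 := by positivity
      have : (t1 : ℤ) = (t2 : ℤ) := by
        rcases mul_eq_zero.mp this with h | h
        · omega
        · exact absurd h hpd
      exact_mod_cast this
    have hZb := badSet_card A M h p.T e
    omega
  obtain ⟨t, htK, hnotbad⟩ := hgood
  refine ⟨⟨T1, D, p.r + (t : ℤ) * (p.d : ℤ), e⟩, hdD, hDpos, by simp [hT1], ?_, heA, heT1, ?_, ?_⟩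
  · -- tail congruence for D
    intro x hx y hy hxT hyT
    have h1 : (p.d : ℤ) ∣ x - y := hpInv x hx y hy (by simp [hT1] at hxT; omega) (by simp [hT1] at hxT hyT; omega)
    have h2 : (d' : ℤ) ∣ x - y := hd'cong x hx y hy (by simp [hT1] at hxT; omega) (by simp [hT1] at hyT; omega)
    have := Int.coe_lcm_dvd h1 h2
    have heq : (Int.lcm (p.d : ℤ) (d' : ℤ) : ℤ) = (D : ℤ) := by
      simp [Int.lcm, hD]
    rwa [heq] at this
  · simp
  · exact fun c hc hdvd => hnotbad ⟨c, hc, hdvd⟩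

theorem chain_contradiction {A : Set ℤ} (hA : IsAdditiveBasis A)
    (Hd : ∀ b : ℕ, ∃ T : ℤ, ∃ d : ℕ, b ≤ d ∧
      ∀ x ∈ A, ∀ y ∈ A, T ≤ x → T ≤ y → (d : ℤ) ∣ x - y) : False := by
  classical
  obtain ⟨M, hM⟩ := basis_bddBelow hA
  have hAinf := basis_infinite hA
  obtain ⟨h, N, hrep⟩ := hA.2
  -- the chain of levels
  set Good : ChainLv → Prop := fun l => 0 < l.d ∧
    (∀ x ∈ A, ∀ y ∈ A, l.T ≤ x → l.T ≤ y → (l.d : ℤ) ∣ x - y) with hGood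
  have hbase : Good ⟨0, 1, 0, 0⟩ := ⟨one_pos, fun x _ y _ _ _ => by simp⟩
  let G : ℕ → {l : ChainLv // Good l} := fun n => Nat.rec ⟨⟨0,1,0,0⟩, hbase⟩
    (fun _ prev => ⟨Classical.choose (chainStep_exists h hAinf hM Hd prev.1 prev.2.1 prev.2.2),
      (Classical.choose_spec (chainStep_exists h hAinf hM Hd prev.1 prev.2.1 prev.2.2)).2.1,
      (Classical.choose_spec (chainStep_exists h hAinf hM Hd prev.1 prev.2.1 prev.2.2)).2.2.2.1⟩) n
  set F : ℕ → ChainLv := fun n => (G n).1 with hF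
  have hFstep : ∀ i : ℕ, ChainStep A M h (F i) (F (i+1)) := by
    intro i
    exact Classical.choose_spec (chainStep_exists h hAinf hM Hd (G i).1 (G i).2.1 (G i).2.2)
  have hFgood : ∀ i : ℕ, Good (F i) := fun i => (G i).2
  -- monotonicity facts
  have hdvd2 : ∀ i j : ℕ, i ≤ j → (F i).d ∣ (F j).d := by
    intro i j hij
    induction j with
    | zero => have : i = 0 := by omega
              subst this; exact dvd_rfl
    | succ j ih =>
        rcases Nat.eq_or_lt_of_le hij with rfl | hlt
        · exact dvd_rfl
        · exact dvd_trans (ih (by omega)) (hFstep j).1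
  have hTmono : ∀ i j : ℕ, i ≤ j → (F i).T ≤ (F j).T := by
    intro i j hij
    induction j with
    | zero => have : i = 0 := by omega
              subst this; exact le_rfl
    | succ j ih =>
        rcases Nat.eq_or_lt_of_le hij with rfl | hlt
        · exact le_rfl
        · exact le_trans (ih (by omega)) (le_of_lt (hFstep j).2.2.1)
  have hrcong : ∀ i j : ℕ, i ≤ j → ((F i).d : ℤ) ∣ (F j).r - (F i).r := by
    intro i j hij
    induction j with
    | zero => have : i = 0 := by omega
              subst this; simp
    | succ j ih =>
        rcases Nat.eq_or_lt_of_le hij with rfl | hlt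
        · simp
        · have h1 := ih (by omega)
          have h2 := (hFstep j).2.2.2.2.2.2.1
          have h3 : ((F i).d : ℤ) ∣ (F (j+1)).r - (F j).r := by
            have : ((F i).d : ℤ) ∣ ((F j).d : ℤ) := by exact_mod_cast hdvd2 i j (by omega)
            exact dvd_trans this h2
          have := dvd_add h1 h3
          simpa using this
  -- choose n
  set dS : ℕ := (F (h+1)).d with hdS
  have hdSpos : 0 < dS := (hFgood (h+1)).1
  set rS : ℤ := (F (h+1)).r with hrS
  set K' : ℤ := max (N - rS) 0 with hK'
  set n : ℤ := rS + (dS : ℤ) * K' with hn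
  have hnN : N ≤ n := by
    have h1 : K' ≤ (dS : ℤ) * K' := by
      have : (1 : ℤ) ≤ (dS : ℤ) := by exact_mod_cast hdSpos
      nlinarith [le_max_right (N - rS) (0:ℤ)]
    have h2 : N - rS ≤ K' := le_max_left _ _
    omega
  obtain ⟨f, hfA, hfs⟩ := hrep n hnN
  -- pigeonhole: some window is empty
  have hwin : ∃ i ∈ Finset.Icc 1 (h+1), ∀ t : Fin h,
      ¬ ((F (i-1)).T ≤ f t ∧ f t < (F i).T) := by
    by_contra hcon
    push_neg at hcon
    have h1mem : (1 : ℕ) ∈ Finset.Icc 1 (h+1) := Finset.mem_Icc.mpr (by omega)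
    have hFinne : Nonempty (Fin h) := by
      obtain ⟨t, -⟩ := hcon 1 h1mem
      exact ⟨t⟩
    choose w hw using hcon
    set w' : ℕ → Fin h := fun i =>
      if hi : i ∈ Finset.Icc 1 (h+1) then w i hi else Classical.choice hFinne with hw'
    have key : ∀ i i', i ∈ Finset.Icc 1 (h+1) → i' ∈ Finset.Icc 1 (h+1) → i < i' →
        w' i ≠ w' i' := by
      intro i i' hi hi' hlt heq
      have hwi := hw i hi
      have hwi' := hw i' hi'
      have heqv : f (w i hi) = f (w i' hi') := by
        rw [hw'] at heq
        simp only [dif_pos hi, dif_pos hi'] at heq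
        rw [heq]
      have hmono : (F i).T ≤ (F (i'-1)).T := hTmono i (i'-1) (by omega)
      have := hwi.2
      rw [heqv] at this
      have := lt_of_lt_of_le this hmono
      have := lt_of_lt_of_le this hwi'.1
      exact lt_irrefl _ this
    have hinj : Set.InjOn w' (Finset.Icc 1 (h+1) : Finset ℕ) := by
      intro i hi i' hi' heq
      by_contra hne
      rcases lt_or_gt_of_ne hne with hlt | hgt
      · exact key i i' (by exact_mod_cast hi) (by exact_mod_cast hi') hlt heq
      · exact key i' i (by exact_mod_cast hi') (by exact_mod_cast hi) hgt heq.symm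
    have hcard := Finset.card_le_card_of_injOn w' (fun i _ => Finset.mem_univ _) hinj
    rw [Nat.card_Icc] at hcard
    simp only [Finset.card_univ, Fintype.card_fin] at hcard
    omega
  obtain ⟨i, hiIcc, hwini⟩ := hwin
  obtain ⟨hi1, hih⟩ := Finset.mem_Icc.mp hiIcc
  have hstep : ChainStep A M h (F (i-1)) (F i) := by
    have := hFstep (i-1)
    have heq : i - 1 + 1 = i := by omega
    rwa [heq] at this
  -- split the representation
  set Sm : Finset (Fin h) := Finset.univ.filter (fun t => f t < (F (i-1)).T) with hSm
  have hbig : ∀ t : Fin h, t ∉ Sm → (F i).T ≤ f t := by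
    intro t ht
    have h1 : ¬ (f t < (F (i-1)).T) := by
      intro hcon
      exact ht (Finset.mem_filter.mpr ⟨Finset.mem_univ t, hcon⟩)
    have h2 := hwini t
    omega
  set σ : ℤ := ∑ t ∈ Sm, f t with hσ
  have hσmem : σ ∈ sumsUpTo (smalls A M (F (i-1)).T) h := by
    refine sum_mem_sumsUpTo Sm f h ?_ ?_
    · exact le_trans (Finset.card_filter_le _ _) (by simp)
    · intro t ht
      refine mem_smalls.mpr ⟨hfA t, hM _ (hfA t), (Finset.mem_filter.mp ht).2⟩
  set Smc : Finset (Fin h) := Finset.univ.filter (fun t => ¬ f t < (F (i-1)).T) with hSmc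
  have hsplit := Finset.sum_filter_add_sum_filter_not Finset.univ
    (fun t => f t < (F (i-1)).T) f
  rw [hfs] at hsplit
  set j : ℕ := Smc.card with hj
  have hjh : j ≤ h := by
    rw [hj, hSmc]
    exact le_trans (Finset.card_filter_le _ _) (by simp)
  have hc : σ + (j : ℤ) * (F i).e ∈ badSet A M h (F (i-1)).T (F i).e :=
    mem_badSet hσmem hjh
  -- divisibility of n - c
  have hdiv1 : ((F i).d : ℤ) ∣ n - (σ + (j : ℤ) * (F i).e) := by
    have h1 : n - (σ + (j : ℤ) * (F i).e) = ∑ t ∈ Smc, (f t - (F i).e) := by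
      rw [Finset.sum_sub_distrib, Finset.sum_const]
      have h2 : ∑ t ∈ Smc, f t = n - σ := by
        rw [hσ, hSm]
        rw [hSmc]
        linarith [hsplit]
      rw [h2, ← hj]
      push_cast [nsmul_eq_mul]
      ring
    rw [h1]
    refine Finset.dvd_sum ?_
    intro t ht
    have hbt : (F i).T ≤ f t := by
      apply hbig
      rw [hSm]
      intro hmem
      have := (Finset.mem_filter.mp hmem).2
      have := (Finset.mem_filter.mp ht).2
      omega
    exact hstep.2.2.2.1 (f t) (hfA t) (F i).e hstep.2.2.2.2.1 hbt hstep.2.2.2.2.2.1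
  -- n ≡ r_i mod d_i
  have hdiv2 : ((F i).d : ℤ) ∣ n - (F i).r := by
    have h1 : ((F i).d : ℤ) ∣ (dS : ℤ) := by
      exact_mod_cast hdvd2 i (h+1) (by omega)
    have h2 : ((F i).d : ℤ) ∣ rS - (F i).r := hrcong i (h+1) (by omega)
    have h3 : n - (F i).r = (dS : ℤ) * K' + (rS - (F i).r) := by rw [hn]; ring
    rw [h3]
    exact dvd_add (Dvd.dvd.mul_right h1 K') h2
  have hdiv3 : ((F i).d : ℤ) ∣ (F i).r - (σ + (j : ℤ) * (F i).e) := by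
    have := dvd_sub hdiv1 hdiv2
    have heq : (n - (σ + (j : ℤ) * (F i).e)) - (n - (F i).r)
        = (F i).r - (σ + (j : ℤ) * (F i).e) := by ring
    rwa [heq] at this
  exact hstep.2.2.2.2.2.2.2 _ hc hdiv3

theorem essential_subsets_finite (A : Set ℤ) (hA : IsAdditiveBasis A) :
    {P : Set ℤ | IsEssentialSubset A P}.Finite := by
  classical
  by_contra hinf
  have hAinf := basis_infinite hA
  set ESS := {P : Set ℤ | IsEssentialSubset A P} with hESS
  have key : ∀ P : Set ℤ, ∃ d : ℕ, P ∈ ESS → (2 ≤ d ∧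
      ∃ x₀ ∈ A \ P, (∀ x ∈ A \ P, (d : ℤ) ∣ x - x₀) ∧
        (∀ a, a ∈ P ↔ a ∈ A ∧ ¬ (d : ℤ) ∣ a - x₀)) := by
    intro P
    by_cases hP : P ∈ ESS
    swap
    · exact ⟨0, fun h => absurd h hP⟩
    obtain ⟨⟨hPA, hPnb, hPmin⟩, hPfin⟩ := hP
    have hd : ∃ d : ℕ, 2 ≤ d ∧ ∀ x ∈ A \ P, ∀ y ∈ A \ P, (d : ℤ) ∣ x - y := by
      by_contra hno
      push_neg at hno
      exact hPnb (eg hA hPfin hPA hno)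
    obtain ⟨d, hd2, hdall⟩ := hd
    obtain ⟨x₀, hx₀⟩ := (hAinf.diff hPfin).nonempty
    refine ⟨d, fun _ => ⟨hd2, x₀, hx₀, fun x hx => hdall x hx x₀ hx₀, fun a => ⟨?_, ?_⟩⟩⟩
    · -- a ∈ P → a ∈ A ∧ ¬ d ∣ a - x₀
      intro ha
      refine ⟨hPA ha, fun hdvd => ?_⟩
      have hQ : P \ {a} ⊂ P := by
        refine ⟨Set.diff_subset, fun hsub => ?_⟩
        exact (hsub ha).2 rfl
      have hbasis := hPmin (P \ {a}) hQ
      refine subclass_not_basis hd2 (x₀ := x₀) ?_ hbasis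
      intro x hx
      rcases Classical.em (x ∈ P) with hxP | hxP
      · have : x = a := by
          by_contra hne
          exact hx.2 ⟨hxP, hne⟩
        subst this; exact hdvd
      · exact hdall x ⟨hx.1, hxP⟩ x₀ hx₀
    · -- a ∈ A ∧ ¬ d ∣ a - x₀ → a ∈ P
      rintro ⟨haA, hnd⟩
      by_contra haP
      exact hnd (hdall a ⟨haA, haP⟩ x₀ hx₀)
  choose dfun hdfun using key
  have hinj : Set.InjOn dfun ESS := by
    intro P hP P' hP' heq
    obtain ⟨hd2, x₀, hx₀, hall, hchar⟩ := hdfun P hP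
    obtain ⟨hd2', x₀', hx₀', hall', hchar'⟩ := hdfun P' hP'
    rw [heq] at hchar hall hd2
    by_cases hdvd : (dfun P' : ℤ) ∣ x₀ - x₀'
    · ext a
      rw [hchar a, hchar' a]
      constructor
      · rintro ⟨haA, hnd⟩
        refine ⟨haA, fun hc => hnd ?_⟩
        have heq4 : a - x₀ = (a - x₀') - (x₀ - x₀') := by ring
        rw [heq4]
        exact dvd_sub hc hdvd
      · rintro ⟨haA, hnd⟩
        refine ⟨haA, fun hc => hnd ?_⟩
        have heq3 : a - x₀' = (a - x₀) + (x₀ - x₀') := by ring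
        rw [heq3]
        exact dvd_add hc hdvd
    · exfalso
      have hsub : A ⊆ P ∪ P' := by
        intro a ha
        by_contra hcon
        rw [Set.mem_union] at hcon
        push_neg at hcon
        have h1 : (dfun P' : ℤ) ∣ a - x₀ := by
          by_contra hh
          exact hcon.1 ((hchar a).mpr ⟨ha, hh⟩)
        have h2 : (dfun P' : ℤ) ∣ a - x₀' := by
          by_contra hh
          exact hcon.2 ((hchar' a).mpr ⟨ha, hh⟩)
        have : (dfun P' : ℤ) ∣ x₀ - x₀' := by
          have heq2 : x₀ - x₀' = (a - x₀') - (a - x₀) := by ring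
          rw [heq2]
          exact dvd_sub h2 h1
        exact hdvd this
      have hPf : P.Finite := hP.2
      have hPf' : P'.Finite := hP'.2
      exact hAinf ((hPf.union hPf').subset hsub)
  have hESSinf : ESS.Infinite := hinf
  have himg : (dfun '' ESS).Infinite := Set.Infinite.image hinj hESSinf
  have Hd : ∀ b : ℕ, ∃ T : ℤ, ∃ dd : ℕ, b ≤ dd ∧
      ∀ x ∈ A, ∀ y ∈ A, T ≤ x → T ≤ y → (dd : ℤ) ∣ x - y := by
    intro b
    have hv : ∃ v ∈ dfun '' ESS, b ≤ v := by
      by_contra hcon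
      push_neg at hcon
      exact himg ((Set.finite_Iio b).subset (fun v hv => hcon v hv))
    obtain ⟨v, ⟨P, hPESS, rfl⟩, hbv⟩ := hv
    obtain ⟨hd2, x₀, hx₀, hall, hchar⟩ := hdfun P hPESS
    have hPfin : P.Finite := hPESS.2
    obtain ⟨TP, hTP⟩ : ∃ TP : ℤ, ∀ a ∈ P, a < TP := by
      obtain ⟨K, hK⟩ := hPfin.bddAbove
      exact ⟨K + 1, fun a ha => by have := hK ha; omega⟩
    refine ⟨TP, dfun P, hbv, fun x hx y hy hxT hyT => ?_⟩
    have hxP : x ∉ P := fun hc => by have := hTP x hc; omega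
    have hyP : y ∉ P := fun hc => by have := hTP y hc; omega
    have h1 := hall x ⟨hx, hxP⟩
    have h2 := hall y ⟨hy, hyP⟩
    have heq2 : x - y = (x - x₀) - (y - x₀) := by ring
    rw [heq2]
    exact dvd_sub h1 h2
  exact chain_contradiction hA Hd
end

section
/- Let A be an additive basis and let P₁ and P₂ be two distinct essentialities of A such that P₁ ∪ P₂ ≠ A. Then d(P₁) ≥ 2 and d(P₂) ≥ 2. -/
open scoped BigOperators

/-- The gcd of a set of integers, as a natural number (the nonnegative generator of the
ideal generated by the set). -/
noncomputable def setGcd (S : Set ℤ) : ℕ :=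
  (Submodule.IsPrincipal.generator (Ideal.span S)).natAbs

/-- `d(P) := gcd {x - y : x, y ∈ A \ P}`. -/
noncomputable def dP (A P : Set ℤ) : ℕ :=
  setGcd {z : ℤ | ∃ x ∈ A \ P, ∃ y ∈ A \ P, z = x - y}

/-! ### Auxiliary material -/

/-- Representability via multisets. -/
def MRep (B : Set ℤ) (t : ℕ) (n : ℤ) : Prop :=
  ∃ l : Multiset ℤ, (∀ x ∈ l, x ∈ B) ∧ Multiset.card l = t ∧ l.sum = n

lemma mrep_of_fun {B : Set ℤ} {h : ℕ} {n : ℤ} (f : Fin h → ℤ)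
    (hf : ∀ i, f i ∈ B) (hsum : ∑ i, f i = n) : MRep B h n := by
  refine ⟨Finset.univ.val.map f, ?_, ?_, ?_⟩
  · intro x hx
    obtain ⟨i, _, rfl⟩ := Multiset.mem_map.mp hx
    exact hf i
  · simp
  · simpa [Finset.sum] using hsum

lemma fun_of_mrep {B : Set ℤ} {h : ℕ} {n : ℤ} (hr : MRep B h n) :
    ∃ f : Fin h → ℤ, (∀ i, f i ∈ B) ∧ (∑ i, f i) = n := by
  obtain ⟨l, hmem, hcard, hsum⟩ := hr
  have hlen : l.toList.length = h := by simpa using hcard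
  refine ⟨fun i => l.toList.get (Fin.cast hlen.symm i), fun i => ?_, ?_⟩
  · exact hmem _ (Multiset.mem_toList.mp (l.toList.get_mem _))
  · rw [Fin.sum_congr' (fun j => l.toList.get j) hlen.symm]
    have h2 : l.toList.sum = n := by rw [Multiset.sum_toList]; exact hsum
    rw [← h2]
    conv_rhs => rw [← List.ofFn_get l.toList]
    rw [List.sum_ofFn]

lemma representsWith_iff (B : Set ℤ) (h : ℕ) :
    RepresentsWith B h ↔ ∃ N : ℤ, ∀ n : ℤ, N ≤ n → MRep B h n := by
  constructor
  · rintro ⟨N, hN⟩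
    exact ⟨N, fun n hn => by obtain ⟨f, hf, hs⟩ := hN n hn; exact mrep_of_fun f hf hs⟩
  · rintro ⟨N, hN⟩
    exact ⟨N, fun n hn => fun_of_mrep (hN n hn)⟩

/-- Any element of the subgroup generated by differences of elements of `B` is a
difference of two equal-size multiset sums of elements of `B`. -/
lemma diff_rep {B : Set ℤ} {d : ℤ}
    (hd : d ∈ AddSubgroup.closure {z : ℤ | ∃ x ∈ B, ∃ y ∈ B, z = x - y}) :
    ∃ U V : Multiset ℤ, (∀ x ∈ U, x ∈ B) ∧ (∀ x ∈ V, x ∈ B) ∧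
      Multiset.card U = Multiset.card V ∧ U.sum - V.sum = d := by
  induction hd using AddSubgroup.closure_induction with
  | mem z hz =>
      obtain ⟨x, hx, y, hy, rfl⟩ := hz
      exact ⟨{x}, {y}, by simpa using hx, by simpa using hy, by simp, by simp⟩
  | zero => exact ⟨0, 0, by simp, by simp, by simp, by simp⟩
  | add x y hx hy ihx ihy =>
      obtain ⟨U₁, V₁, hU₁, hV₁, hc₁, hs₁⟩ := ihx
      obtain ⟨U₂, V₂, hU₂, hV₂, hc₂, hs₂⟩ := ihy
      refine ⟨U₁ + U₂, V₁ + V₂, ?_, ?_, by simp [hc₁, hc₂], by simp; omega⟩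
      · intro a ha; rcases Multiset.mem_add.mp ha with h | h
        · exact hU₁ _ h
        · exact hU₂ _ h
      · intro a ha; rcases Multiset.mem_add.mp ha with h | h
        · exact hV₁ _ h
        · exact hV₂ _ h
  | neg x hx ihx =>
      obtain ⟨U, V, hU, hV, hc, hs⟩ := ihx
      exact ⟨V, U, hV, hU, hc.symm, by omega⟩

/-- Over `ℤ`, the ideal span coincides with the additive subgroup closure. -/
lemma mem_span_iff_mem_closure (S : Set ℤ) (x : ℤ) :
    x ∈ Ideal.span S ↔ x ∈ AddSubgroup.closure S := by
  constructor
  · intro hx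
    induction hx using Submodule.span_induction with
    | mem z hz => exact AddSubgroup.subset_closure hz
    | zero => exact zero_mem _
    | add a b _ _ iha ihb => exact add_mem iha ihb
    | smul r a _ iha => simpa using AddSubgroup.zsmul_mem _ iha r
  · intro hx
    induction hx using AddSubgroup.closure_induction with
    | mem z hz => exact Ideal.subset_span hz
    | zero => exact zero_mem _
    | add a b _ _ iha ihb => exact add_mem iha ihb
    | neg a _ iha => exact neg_mem iha

lemma sum_nsmul' (k : ℕ) (s : Multiset ℤ) : (k • s).sum = (k : ℤ) * s.sum := by
  induction k with
  | zero => simp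
  | succ m ih =>
      rw [succ_nsmul, Multiset.sum_add, ih]
      push_cast
      ring

lemma infinite_of_representsWith {B : Set ℤ} {h : ℕ} (hB : RepresentsWith B h) :
    B.Infinite := by
  obtain ⟨N, hN⟩ := hB
  by_contra hfin
  rw [Set.not_infinite] at hfin
  haveI := hfin.fintype
  have hsub : Set.Ici N ⊆ Set.range (fun f : Fin h → ↥B => ∑ i, (f i : ℤ)) := by
    intro n hn
    obtain ⟨f, hf, hs⟩ := hN n hn
    exact ⟨fun i => ⟨f i, hf i⟩, by simpa using hs⟩
  exact Set.not_infinite.mpr ((Set.finite_range _).subset hsub) (Set.Ici_infinite N)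

/-- Key lemma: if `C` represents with some `h` and the differences of `C \ {y}` generate
all of `ℤ`, then `C \ {y}` represents with some `H`. -/
lemma key {C : Set ℤ} {y : ℤ} {h : ℕ} (hC : RepresentsWith C h)
    (hsp : AddSubgroup.closure {z : ℤ | ∃ x ∈ C \ {y}, ∃ x' ∈ C \ {y}, z = x - x'} = ⊤) :
    ∃ H : ℕ, RepresentsWith (C \ {y}) H := by
  set B := C \ {y} with hB
  have hBne : B.Nonempty := by
    by_contra hne
    rw [Set.not_nonempty_iff_eq_empty] at hne
    have hSe : {z : ℤ | ∃ x ∈ B, ∃ x' ∈ B, z = x - x'} = ∅ := by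
      simp [hne]
    rw [hSe, AddSubgroup.closure_empty] at hsp
    have : (1 : ℤ) ∈ (⊥ : AddSubgroup ℤ) := hsp ▸ AddSubgroup.mem_top 1
    simpa using this
  obtain ⟨b₀, hb₀⟩ := hBne
  have hyd : y - b₀ ∈ AddSubgroup.closure {z : ℤ | ∃ x ∈ B, ∃ x' ∈ B, z = x - x'} := by
    rw [hsp]; trivial
  obtain ⟨U, V, hU, hV, hcUV, hsUV⟩ := diff_rep hyd
  obtain ⟨N, hN⟩ := (representsWith_iff C h).mp hC
  set u := Multiset.card U with hu
  refine ⟨h + h * u, ?_⟩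
  rw [representsWith_iff]
  refine ⟨N + (h : ℤ) * V.sum, fun m hm => ?_⟩
  obtain ⟨l, hlmem, hlcard, hlsum⟩ := hN (m - (h : ℤ) * V.sum) (by omega)
  classical
  set k := l.count y with hk
  set l' := l.filter (· ≠ y) with hl'
  have hsplit : l = Multiset.replicate k y + l' := by
    conv_lhs => rw [← Multiset.filter_add_not (· = y) l]
    congr 1
    · rw [hk]; exact Multiset.filter_eq' l y
  have hkh : k ≤ h := by
    have := Multiset.count_le_card y l
    omega
  have hl'card : Multiset.card l' = h - k := by
    have : Multiset.card l = k + Multiset.card l' := by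
      rw [hsplit]; simp
    omega
  have hl'sum : l'.sum = (m - (h : ℤ) * V.sum) - (k : ℤ) * y := by
    have : l.sum = (k : ℤ) * y + l'.sum := by
      rw [hsplit, Multiset.sum_add, Multiset.sum_replicate]
      simp [nsmul_eq_mul]
    omega
  have hl'mem : ∀ x ∈ l', x ∈ B := by
    intro x hx
    rw [hl'] at hx
    obtain ⟨hxl, hxy⟩ := Multiset.mem_filter.mp hx
    exact ⟨hlmem x hxl, by simpa using hxy⟩
  refine ⟨l' + k • ({b₀} + U) + (h - k) • V, ?_, ?_, ?_⟩
  · intro x hx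
    rcases Multiset.mem_add.mp hx with hx1 | hx1
    · rcases Multiset.mem_add.mp hx1 with hx2 | hx2
      · exact hl'mem x hx2
      · obtain ⟨-, hx3⟩ := Multiset.mem_nsmul.mp hx2
        rcases Multiset.mem_add.mp hx3 with hx4 | hx4
        · rw [Multiset.mem_singleton.mp hx4]; exact hb₀
        · exact hU x hx4
    · obtain ⟨-, hx2⟩ := Multiset.mem_nsmul.mp hx1
      exact hV x hx2
  · simp only [Multiset.card_add, Multiset.card_nsmul, hl'card, Multiset.card_singleton,
      ← hcUV, ← hu]
    obtain ⟨d, rfl⟩ := Nat.exists_eq_add_of_le hkh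
    rw [Nat.add_sub_cancel_left]
    ring
  · rw [Multiset.sum_add, Multiset.sum_add, sum_nsmul', sum_nsmul', hl'sum,
      Multiset.sum_add, Multiset.sum_singleton]
    have hcast : ((h - k : ℕ) : ℤ) = (h : ℤ) - (k : ℤ) := by
      omega
    rw [hcast]
    linear_combination (k : ℤ) * hsUV

/-- The heart of the argument: any essentiality of an additive basis has `d(P) ≥ 2`. -/
lemma dP_ge_two_of_essentiality {A P : Set ℤ} (hA : IsAdditiveBasis A)
    (hP : IsEssentiality A P) : 2 ≤ dP A P := by
  obtain ⟨hPA, hnb, hmin⟩ := hP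
  have hPne : P.Nonempty := by
    rcases Set.eq_empty_or_nonempty P with rfl | hne
    · rw [Set.diff_empty] at hnb
      exact absurd hA hnb
    · exact hne
  obtain ⟨y, hy⟩ := hPne
  have hCb : IsAdditiveBasis (A \ (P \ {y})) := hmin _ (Set.sdiff_singleton_ssubset.mpr hy)
  set C : Set ℤ := A \ (P \ {y}) with hCdef
  have hCeq : C \ {y} = A \ P := by
    ext x
    simp only [hCdef, Set.mem_diff, Set.mem_singleton_iff]
    constructor
    · rintro ⟨⟨hxA, hxP⟩, hxy⟩
      exact ⟨hxA, fun hxp => hxP ⟨hxp, hxy⟩⟩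
    · rintro ⟨hxA, hxP⟩
      exact ⟨⟨hxA, fun hc => hxP hc.1⟩, fun hc => hxP (hc ▸ hy)⟩
  set S : Set ℤ := {z : ℤ | ∃ x ∈ A \ P, ∃ y ∈ A \ P, z = x - y} with hSdef
  have hdp : dP A P = (Submodule.IsPrincipal.generator (Ideal.span S)).natAbs := rfl
  have hne1 : dP A P ≠ 1 := by
    intro h1
    rw [hdp] at h1
    have hgen : IsUnit (Submodule.IsPrincipal.generator (Ideal.span S)) := by
      rcases Int.natAbs_eq_iff.mp h1 with h | h <;> rw [h] <;> simp [Int.isUnit_iff]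
    have htop : Ideal.span S = ⊤ :=
      Ideal.eq_top_of_isUnit_mem _ (Submodule.IsPrincipal.generator_mem _) hgen
    have hcl : AddSubgroup.closure S = ⊤ := by
      rw [eq_top_iff]
      intro x _
      exact (mem_span_iff_mem_closure S x).mp (by rw [htop]; trivial)
    obtain ⟨h, hrep⟩ := hCb.2
    have hsp : AddSubgroup.closure {z : ℤ | ∃ x ∈ C \ {y}, ∃ x' ∈ C \ {y}, z = x - x'} = ⊤ := by
      rw [hCeq]
      exact hcl
    obtain ⟨H, hrepB⟩ := key hrep hsp
    rw [hCeq] at hrepB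
    refine hnb ⟨hA.1.subset ?_, H, hrepB⟩
    intro x hx
    exact ⟨hx.1.1, hx.2⟩
  have hne0 : dP A P ≠ 0 := by
    intro h0
    rw [hdp] at h0
    have hg0 : Submodule.IsPrincipal.generator (Ideal.span S) = 0 := Int.natAbs_eq_zero.mp h0
    have hbot : Ideal.span S = ⊥ := by
      rw [← Submodule.IsPrincipal.span_singleton_generator (Ideal.span S), hg0]
      simp
    obtain ⟨h, hrep⟩ := hCb.2
    have hinf : (A \ P).Infinite := by
      rw [← hCeq]
      exact (infinite_of_representsWith hrep).diff (Set.finite_singleton y)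
    obtain ⟨x, hx⟩ := hinf.nonempty
    obtain ⟨x', hx'⟩ := (hinf.diff (Set.finite_singleton x)).nonempty
    have hmem : (x - x' : ℤ) ∈ Ideal.span S :=
      Ideal.subset_span ⟨x, hx, x', hx'.1, rfl⟩
    rw [hbot, Submodule.mem_bot] at hmem
    exact hx'.2 (by simpa using (sub_eq_zero.mp hmem).symm)
  omega

theorem dP_ge_two (A P₁ P₂ : Set ℤ) (hA : IsAdditiveBasis A)
    (h₁ : IsEssentiality A P₁) (h₂ : IsEssentiality A P₂) (hne : P₁ ≠ P₂)
    (hcover : P₁ ∪ P₂ ≠ A) :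
    2 ≤ dP A P₁ ∧ 2 ≤ dP A P₂ := by
  exact ⟨dP_ge_two_of_essentiality hA h₁, dP_ge_two_of_essentiality hA h₂⟩
end

section
/- Let A be an additive basis and let P₁ and P₂ be two distinct essentialities of A such that P₁ ∪ P₂ ≠ A. Then gcd(d(P₁), d(P₂)) = 1. -/
open scoped BigOperators

lemma dP_dvd_sub {A P : Set ℤ} {x y : ℤ} (hx : x ∈ A \ P) (hy : y ∈ A \ P) :
    (dP A P : ℤ) ∣ x - y := by
  have hmem : x - y ∈ Ideal.span {z : ℤ | ∃ x ∈ A \ P, ∃ y ∈ A \ P, z = x - y} :=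
    Ideal.subset_span ⟨x, hx, y, hy, rfl⟩
  have hgen := (Submodule.IsPrincipal.mem_iff_generator_dvd _).mp hmem
  simpa [dP, setGcd, Int.natAbs_dvd] using hgen

theorem dP_coprime (A P₁ P₂ : Set ℤ) (hA : IsAdditiveBasis A)
    (h₁ : IsEssentiality A P₁) (h₂ : IsEssentiality A P₂) (hne : P₁ ≠ P₂)
    (hcover : P₁ ∪ P₂ ≠ A) :
    Nat.gcd (dP A P₁) (dP A P₂) = 1 := by
  classical
  set g : ℕ := Nat.gcd (dP A P₁) (dP A P₂) with hg
  -- find a ∈ A outside both P₁ and P₂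
  have hsub : P₁ ∪ P₂ ⊆ A := Set.union_subset h₁.1 h₂.1
  obtain ⟨a, haA, haP⟩ : ∃ a, a ∈ A ∧ a ∉ P₁ ∪ P₂ := by
    by_contra hc
    push_neg at hc
    exact hcover (Set.Subset.antisymm hsub hc)
  have haP1 : a ∉ P₁ := fun h => haP (Or.inl h)
  have haP2 : a ∉ P₂ := fun h => haP (Or.inr h)
  -- P₁ ∩ P₂ is a strict subset of P₁
  have hQ : P₁ ∩ P₂ ⊂ P₁ := by
    refine ⟨Set.inter_subset_left, fun hle => ?_⟩
    have h12 : P₁ ⊆ P₂ := fun x hx => (hle hx).2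
    rcases h12.eq_or_ssubset with heq | hss
    · exact hne heq
    · exact h₁.2.1 (h₂.2.2 P₁ hss)
  -- every element of A \ (P₁ ∩ P₂) is ≡ a mod g
  have key : ∀ x ∈ A \ (P₁ ∩ P₂), (g : ℤ) ∣ x - a := by
    rintro x ⟨hxA, hxP⟩
    rw [Set.mem_inter_iff, not_and_or] at hxP
    rcases hxP with hx1 | hx2
    · exact dvd_trans (Int.natCast_dvd_natCast.mpr (Nat.gcd_dvd_left _ _))
        (dP_dvd_sub ⟨hxA, hx1⟩ ⟨haA, haP1⟩)
    · exact dvd_trans (Int.natCast_dvd_natCast.mpr (Nat.gcd_dvd_right _ _))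
        (dP_dvd_sub ⟨hxA, hx2⟩ ⟨haA, haP2⟩)
  -- A \ (P₁ ∩ P₂) is an additive basis by minimality of P₁
  obtain ⟨hfin, h, N, hrep⟩ := h₁.2.2 (P₁ ∩ P₂) hQ
  obtain ⟨f, hf, hfs⟩ := hrep N le_rfl
  obtain ⟨f', hf', hfs'⟩ := hrep (N + 1) (by linarith)
  have hdvd : (g : ℤ) ∣ 1 := by
    have hsum : (g : ℤ) ∣ (∑ i, f' i) - (∑ i, f i) := by
      rw [← Finset.sum_sub_distrib]
      refine Finset.dvd_sum fun i _ => ?_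
      have h1 := key _ (hf' i)
      have h2 := key _ (hf i)
      simpa [sub_sub_sub_cancel_right] using dvd_sub h1 h2
    rw [hfs', hfs] at hsum
    simpa using hsum
  have : g ∣ 1 := by exact_mod_cast hdvd
  exact Nat.dvd_one.mp this
end

section
/- Let A be an additive basis and let (Pᵢ)_{i ∈ I} be a nonempty family of pairwise distinct essential subsets of A. Then for every pair (x, y) ∈ A² with x ≠ y, the set J_{x,y} := {i ∈ I : x ∉ Pᵢ and y ∉ Pᵢ} is finite. -/
open scoped BigOperators

/- ### Auxiliary lemmas -/

private lemma multiset_to_fin {B : Set ℤ} {k : ℕ} {n : ℤ}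
    {M : Multiset ℤ} (hc : Multiset.card M = k) (hmem : ∀ a ∈ M, a ∈ B) (hs : M.sum = n) :
    ∃ f : Fin k → ℤ, (∀ i, f i ∈ B) ∧ (∑ i, f i) = n := by
  have hlen : M.toList.length = k := by simpa using hc
  refine ⟨fun i => M.toList.get (Fin.cast hlen.symm i), fun i => ?_, ?_⟩
  · exact hmem _ (by rw [← Multiset.mem_toList]; exact List.get_mem _ _)
  · rw [← hs, ← Multiset.sum_toList, ← Fin.sum_univ_getElem]
    exact Fintype.sum_equiv (finCongr hlen.symm) _ _ (fun i => rfl)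

private lemma fin_to_multiset {B : Set ℤ} {k : ℕ} {n : ℤ} (f : Fin k → ℤ)
    (hmem : ∀ i, f i ∈ B) (hs : (∑ i, f i) = n) :
    ∃ M : Multiset ℤ, Multiset.card M = k ∧ (∀ a ∈ M, a ∈ B) ∧ M.sum = n := by
  refine ⟨Finset.univ.val.map f, by simp, ?_, by rw [← hs]; rfl⟩
  intro a ha
  obtain ⟨i, _, rfl⟩ := Multiset.mem_map.mp ha
  exact hmem i

private lemma not_basis_of_dvd {B : Set ℤ} {d : ℕ} (hd : 2 ≤ d)
    (hdvd : ∀ a ∈ B, ∀ b ∈ B, (d : ℤ) ∣ a - b) : ¬ IsAdditiveBasis B := by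
  rintro ⟨-, h, N, hrep⟩
  obtain ⟨f, hf, hfs⟩ := hrep N le_rfl
  obtain ⟨g, hg, hgs⟩ := hrep (N + 1) (by omega)
  have hdd : (d : ℤ) ∣ ∑ i, (f i - g i) :=
    Finset.dvd_sum fun i _ => hdvd _ (hf i) _ (hg i)
  rw [Finset.sum_sub_distrib, hfs, hgs] at hdd
  have h1 : (d : ℤ) ∣ 1 := (dvd_neg (α := ℤ)).mp (show (d : ℤ) ∣ -1 by convert hdd using 1; ring)
  have : d ∣ 1 := by exact_mod_cast h1
  have := Nat.dvd_one.mp this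
  omega

private lemma exists_gadget {B : Set ℤ}
    (hnd : ¬ ∃ d : ℕ, 2 ≤ d ∧ ∀ a ∈ B, ∀ b ∈ B, (d : ℤ) ∣ a - b) :
    ∃ U V : Multiset ℤ, (∀ a ∈ U, a ∈ B) ∧ (∀ a ∈ V, a ∈ B) ∧
      Multiset.card U = Multiset.card V ∧ U.sum = V.sum + 1 := by
  set S : Set ℤ := {z | ∃ a ∈ B, ∃ b ∈ B, a - b = z} with hS
  have h1 : (1 : ℤ) ∈ AddSubgroup.closure S := by
    by_contra h1
    obtain ⟨g, hg⟩ := Int.subgroup_cyclic (AddSubgroup.closure S)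
    apply hnd
    have hdvd : ∀ a ∈ B, ∀ b ∈ B, g ∣ a - b := by
      intro a ha b hb
      have hmem : a - b ∈ AddSubgroup.closure S := AddSubgroup.subset_closure ⟨a, ha, b, hb, rfl⟩
      rw [hg, AddSubgroup.mem_closure_singleton] at hmem
      obtain ⟨n, hn⟩ := hmem
      exact ⟨n, by rw [← hn]; simp [mul_comm]⟩
    rcases eq_or_ne g 0 with rfl | hg0
    · exact ⟨2, le_rfl, fun a ha b hb => by
        have := hdvd a ha b hb; simp only [zero_dvd_iff] at this; simp [this]⟩
    · refine ⟨g.natAbs, ?_, fun a ha b hb => (Int.natAbs_dvd).mpr (hdvd a ha b hb)⟩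
      by_contra hlt
      have hna : g.natAbs ≠ 0 := fun h => hg0 (Int.natAbs_eq_zero.mp h)
      have hone : g.natAbs = 1 := by omega
      apply h1
      rw [hg, AddSubgroup.mem_closure_singleton]
      refine ⟨g, ?_⟩
      rcases Int.natAbs_eq_iff.mp hone with h | h <;> rw [smul_eq_mul, h] <;> norm_num
  refine AddSubgroup.closure_induction
    (p := fun z _ => ∃ U V : Multiset ℤ, (∀ a ∈ U, a ∈ B) ∧ (∀ a ∈ V, a ∈ B) ∧
      Multiset.card U = Multiset.card V ∧ U.sum = V.sum + z) ?_ ?_ ?_ ?_ h1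
  · rintro z ⟨a, ha, b, hb, rfl⟩
    exact ⟨{a}, {b}, by simpa using ha, by simpa using hb, by simp, by simp⟩
  · exact ⟨0, 0, by simp, by simp, rfl, by simp⟩
  · rintro x y - - ⟨U1, V1, hU1, hV1, hc1, hs1⟩ ⟨U2, V2, hU2, hV2, hc2, hs2⟩
    refine ⟨U1 + U2, V1 + V2, ?_, ?_, by simp [hc1, hc2], by simp only [Multiset.sum_add]; omega⟩
    · intro a ha; rcases Multiset.mem_add.mp ha with h | h
      exacts [hU1 _ h, hU2 _ h]
    · intro a ha; rcases Multiset.mem_add.mp ha with h | h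
      exacts [hV1 _ h, hV2 _ h]
  · rintro x - ⟨U, V, hU, hV, hc, hs⟩
    exact ⟨V, U, hV, hU, hc.symm, by omega⟩

private lemma msum_nsmul (k : ℕ) (M : Multiset ℤ) : (k • M).sum = (k : ℤ) * M.sum := by
  induction k with
  | zero => simp
  | succ k ih => rw [succ_nsmul, Multiset.sum_add, ih]; push_cast; ring

private lemma mcard_nsmul (k : ℕ) (M : Multiset ℤ) :
    Multiset.card (k • M) = k * Multiset.card M := by
  induction k with
  | zero => simp
  | succ k ih => rw [succ_nsmul, Multiset.card_add, ih]; ring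

private lemma mmem_nsmul {k : ℕ} {M : Multiset ℤ} {a : ℤ} (h : a ∈ k • M) : a ∈ M := by
  induction k with
  | zero => simp at h
  | succ k ih =>
    rw [succ_nsmul, Multiset.mem_add] at h
    rcases h with h | h
    exacts [ih h, h]

private lemma exists_dvd_of_not_basis {A F : Set ℤ} (hA : IsAdditiveBasis A) (hF : F.Finite)
    (hnb : ¬ IsAdditiveBasis (A \ F)) :
    ∃ d : ℕ, 2 ≤ d ∧ ∀ a ∈ A \ F, ∀ b ∈ A \ F, (d : ℤ) ∣ a - b := by
  by_contra hnd
  obtain ⟨U, V, hU, hV, hcUV, hsUV⟩ := exists_gadget hnd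
  have hUne : U ≠ 0 := by
    rintro rfl
    rw [Multiset.card_zero] at hcUV
    rw [Multiset.sum_zero, (Multiset.card_eq_zero.mp hcUV.symm)] at hsUV
    simp at hsUV
  obtain ⟨b0, hb0U⟩ := Multiset.exists_mem_of_ne_zero hUne
  have hb0 : b0 ∈ A \ F := hU _ hb0U
  obtain ⟨hAneg, h, N, hrep⟩ := hA
  classical
  set m := Multiset.card V with hm
  set Mn : ℕ := hF.toFinset.sup (fun f => (f - b0).natAbs) with hMn
  set t : ℕ := 2 * h * Mn with ht
  refine hnb ⟨hAneg.subset (fun z hz => ⟨hz.1.1, hz.2⟩), h + t * m, N + t * V.sum + h * Mn, ?_⟩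
  intro n hn
  obtain ⟨f, hf, hfs⟩ := hrep (n - t * V.sum - h * Mn) (by linarith)
  set r : Fin h → ℤ := fun i => if f i ∈ F then b0 else f i with hr
  have hrB : ∀ i, r i ∈ A \ F := by
    intro i
    simp only [hr]
    split
    · exact hb0
    · exact ⟨hf i, by assumption⟩
  have hbound : ∀ i, -(Mn : ℤ) ≤ f i - r i ∧ f i - r i ≤ (Mn : ℤ) := by
    intro i
    simp only [hr]
    split
    · rename_i hfi
      have hle : (f i - b0).natAbs ≤ Mn :=
        Finset.le_sup (f := fun f => (f - b0).natAbs) (hF.mem_toFinset.mpr hfi)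
      constructor <;> omega
    · simp
  set D : ℤ := ∑ i, (f i - r i) with hD
  have hDb : -((h : ℤ) * Mn) ≤ D ∧ D ≤ (h : ℤ) * Mn := by
    constructor
    · calc -((h : ℤ) * Mn) = ∑ _i : Fin h, (-(Mn : ℤ)) := by
            simp [Finset.sum_const, mul_comm]
        _ ≤ D := Finset.sum_le_sum fun i _ => (hbound i).1
    · calc D ≤ ∑ _i : Fin h, (Mn : ℤ) := Finset.sum_le_sum fun i _ => (hbound i).2
        _ = (h : ℤ) * Mn := by simp [Finset.sum_const, mul_comm]
  have hrs : ∑ i, r i = (n - t * V.sum - h * Mn) - D := by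
    rw [hD, Finset.sum_sub_distrib, hfs]; ring
  set e : ℤ := (h : ℤ) * Mn + D with he
  have he0 : 0 ≤ e := by
    rw [he]; linarith [hDb.1]
  have het : e ≤ (t : ℤ) := by
    have htt : (t : ℤ) = 2 * ((h : ℤ) * Mn) := by rw [ht]; push_cast; ring
    rw [htt, he]; linarith [hDb.2]
  set eN : ℕ := e.toNat with heN
  have heNe : (eN : ℤ) = e := Int.toNat_of_nonneg he0
  have heNt : eN ≤ t := by omega
  set G : Multiset ℤ := eN • U + (t - eN) • V with hG
  set T : Multiset ℤ := Finset.univ.val.map r + G with hT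
  have hTmem : ∀ a ∈ T, a ∈ A \ F := by
    intro a ha
    rw [hT, Multiset.mem_add] at ha
    rcases ha with ha | ha
    · obtain ⟨i, _, rfl⟩ := Multiset.mem_map.mp ha
      exact hrB i
    · rw [hG, Multiset.mem_add] at ha
      rcases ha with ha | ha
      exacts [hU _ (mmem_nsmul ha), hV _ (mmem_nsmul ha)]
  have hTcard : Multiset.card T = h + t * m := by
    rw [hT, Multiset.card_add, Multiset.card_map, hG, Multiset.card_add,
      mcard_nsmul, mcard_nsmul, hcUV, ← hm]
    simp
    have : eN * m + (t - eN) * m = t * m := by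
      rw [← Nat.add_mul]; congr 1; omega
    omega
  have hTsum : T.sum = n := by
    rw [hT, Multiset.sum_add, hG, Multiset.sum_add, msum_nsmul, msum_nsmul, hsUV]
    have hmap : (Finset.univ.val.map r).sum = (n - t * V.sum - h * Mn) - D := by
      rw [← hrs]; rfl
    rw [hmap]
    have hcast : ((t - eN : ℕ) : ℤ) = (t : ℤ) - eN := by
      push_cast [heNt]; ring
    rw [hcast, heNe, he]
    ring
  obtain ⟨g, hg1, hg2⟩ := multiset_to_fin hTcard hTmem hTsum
  exact ⟨g, hg1, hg2⟩

theorem Jxy_finite {I : Type*} (A : Set ℤ) (P : I → Set ℤ) (hA : IsAdditiveBasis A)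
    (hI : Nonempty I) (hP : ∀ i, IsEssentialSubset A (P i))
    (hdist : ∀ i j : I, i ≠ j → P i ≠ P j) :
    ∀ x ∈ A, ∀ y ∈ A, x ≠ y → {i : I | x ∉ P i ∧ y ∉ P i}.Finite := by
  intro x hx y hy hxy
  classical
  rw [← Set.finite_coe_iff]
  set J := {i : I | x ∉ P i ∧ y ∉ P i} with hJ
  have hd : ∀ k : J, ∃ d : ℕ, 2 ≤ d ∧ ∀ a ∈ A \ P (k : I), ∀ b ∈ A \ P (k : I), (d : ℤ) ∣ a - b :=
    fun k => exists_dvd_of_not_basis hA (hP (k : I)).2 (hP (k : I)).1.2.1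
  choose d hd2 hdvd using hd
  have hxk : ∀ k : J, x ∈ A \ P (k : I) := fun k => ⟨hx, k.2.1⟩
  have hyk : ∀ k : J, y ∈ A \ P (k : I) := fun k => ⟨hy, k.2.2⟩
  have key : ∀ k l : J, d k = d l → P (k : I) ⊆ P (l : I) := by
    intro k l hkl
    by_contra hnsub
    have hnb : ¬ IsAdditiveBasis (A \ (P (k : I) ∩ P (l : I))) := by
      apply not_basis_of_dvd (hd2 k)
      have hmod : ∀ z ∈ A \ (P (k : I) ∩ P (l : I)), (d k : ℤ) ∣ z - x := by
        intro z hz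
        rcases not_and_or.mp (fun hc => hz.2 ⟨hc.1, hc.2⟩) with h | h
        · exact hdvd k _ ⟨hz.1, h⟩ _ (hxk k)
        · rw [hkl]; exact hdvd l _ ⟨hz.1, h⟩ _ (hxk l)
      intro a ha b hb
      have h1 := hmod a ha
      have h2 := hmod b hb
      have := dvd_sub h1 h2
      simpa using this
    have hss : P (k : I) ∩ P (l : I) ⊂ P (k : I) := by
      refine ⟨Set.inter_subset_left, fun hsub2 => hnsub ?_⟩
      intro z hz
      exact (hsub2 hz).2
    exact hnb ((hP (k : I)).1.2.2 _ hss)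
  have hinj : Function.Injective d := by
    intro k l hkl
    have hPP : P (k : I) = P (l : I) := subset_antisymm (key k l hkl) (key l k hkl.symm)
    have : (k : I) = (l : I) := by
      by_contra hne
      exact hdist _ _ hne hPP
    exact Subtype.ext this
  have hmem : ∀ k : J, d k ∈ (x - y).natAbs.divisors := by
    intro k
    rw [Nat.mem_divisors]
    constructor
    · have hdxy : (d k : ℤ) ∣ x - y := hdvd k x (hxk k) y (hyk k)
      have := Int.natAbs_dvd_natAbs.mpr hdxy
      simpa using this
    · exact Int.natAbs_ne_zero.mpr (sub_ne_zero.mpr hxy)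
  exact Finite.of_injective (fun k => (⟨d k, hmem k⟩ : ((x - y).natAbs.divisors : Finset ℕ)))
    (fun a b hab => hinj (congrArg Subtype.val hab))
end

section
/- Let A be an additive basis and let (Pᵢ)_{i ∈ I} be a nonempty family of pairwise distinct essential subsets of A. Then for every pair (x, y) ∈ A² with x ≠ y, the cardinality of the set J_{x,y} := {i ∈ I : x ∉ Pᵢ and y ∉ Pᵢ} is at most ω(|x − y|), the number of distinct prime factors of |x − y|. -/
open scoped BigOperators

def InSum (B : Set ℤ) (t : ℕ) (n : ℤ) : Prop :=
  ∃ f : Fin t → ℤ, (∀ i, f i ∈ B) ∧ (∑ i, f i) = n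

lemma insum_const_zero {B : Set ℤ} (h0 : (0:ℤ) ∈ B) (t : ℕ) : InSum B t 0 :=
  ⟨fun _ => 0, fun _ => h0, by simp⟩

lemma insum_single {B : Set ℤ} {b : ℤ} (hb : b ∈ B) : InSum B 1 b :=
  ⟨fun _ => b, fun _ => hb, by simp⟩

lemma insum_add {B : Set ℤ} {s t : ℕ} {m n : ℤ} (hm : InSum B s m) (hn : InSum B t n) :
    InSum B (s + t) (m + n) := by
  obtain ⟨f, hf, rfl⟩ := hm
  obtain ⟨g, hg, rfl⟩ := hn
  refine ⟨Fin.append f g, ?_, ?_⟩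
  · intro i
    refine Fin.addCases (fun j => ?_) (fun j => ?_) i
    · simpa using hf j
    · simpa using hg j
  · rw [Fin.sum_univ_add]
    simp

lemma insum_smul {B : Set ℤ} {t : ℕ} {m : ℤ} (hm : InSum B t m) (k : ℕ) :
    InSum B (k * t) ((k : ℤ) * m) := by
  induction k with
  | zero => exact ⟨fun i => 0, fun i => absurd i.2 (by simp), by simp⟩
  | succ k ih =>
      have := insum_add ih hm
      have he : (k+1) * t = k * t + t := by ring
      have he2 : ((k+1 : ℕ) : ℤ) * m = (k:ℤ) * m + m := by push_cast; ring
      rw [he, he2]; exact this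

lemma insum_pad {B : Set ℤ} (h0 : (0:ℤ) ∈ B) {t : ℕ} {m : ℤ} (hm : InSum B t m)
    {s : ℕ} (hts : t ≤ s) : InSum B s m := by
  have := insum_add hm (insum_const_zero h0 (s - t))
  rwa [Nat.add_sub_cancel' hts, add_zero] at this

lemma insum_nonneg {B : Set ℤ} (hB : ∀ b ∈ B, 0 ≤ b) {t : ℕ} {m : ℤ} (hm : InSum B t m) :
    0 ≤ m := by
  obtain ⟨f, hf, rfl⟩ := hm
  exact Finset.sum_nonneg fun i _ => hB _ (hf i)

lemma insum_sum {B : Set ℤ} {t : ℕ} : ∀ {k : ℕ} (c : Fin k → ℤ),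
    (∀ i, InSum B t (c i)) → InSum B (k * t) (∑ i, c i) := by
  intro k
  induction k with
  | zero => intro c _; exact ⟨fun i => 0, fun i => absurd i.2 (by simp), by simp⟩
  | succ k ih =>
      intro c hc
      have h1 := ih (fun i => c i.castSucc) (fun i => hc _)
      have h2 := insum_add h1 (hc (Fin.last k))
      rw [Fin.sum_univ_castSucc]
      have : (k+1) * t = k * t + t := by ring
      rw [this]; exact h2

lemma insum_translate {B G : Set ℤ} {b₀ : ℤ} (hGB : ∀ g ∈ G, g + b₀ ∈ B)
    {t : ℕ} {v : ℤ} (hv : InSum G t v) : InSum B t (v + t * b₀) := by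
  obtain ⟨f, hf, rfl⟩ := hv
  refine ⟨fun i => f i + b₀, fun i => hGB _ (hf i), ?_⟩
  rw [Finset.sum_add_distrib]
  simp [mul_comm]


lemma rep_infinite {A : Set ℤ} {h : ℕ} {N : ℤ}
    (hrep : ∀ n : ℤ, N ≤ n → ∃ f : Fin h → ℤ, (∀ i, f i ∈ A) ∧ (∑ i, f i) = n) :
    A.Infinite := by
  intro hfin
  have hT : ((fun f : Fin h → ℤ => ∑ i, f i) '' (Set.univ.pi fun _ : Fin h => A)).Finite :=
    (Set.Finite.pi fun _ => hfin).image _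
  have hsub : Set.Ici N ⊆ (fun f : Fin h → ℤ => ∑ i, f i) '' (Set.univ.pi fun _ : Fin h => A) := by
    intro n hn
    obtain ⟨f, hf, hs⟩ := hrep n hn
    exact ⟨f, by simpa using hf, hs⟩
  exact (Set.Ici_infinite N) (hT.subset hsub)

lemma not_rep_of_congruent {C : Set ℤ} {p : ℕ} (hp : 2 ≤ p) {r : ℤ}
    (hC : ∀ c ∈ C, (p:ℤ) ∣ c - r) : ¬ ∃ h, RepresentsWith C h := by
  rintro ⟨h, N, hrep⟩
  set k : ℤ := max (N - ((h:ℤ) * r + 1)) 0 with hk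
  have hk0 : 0 ≤ k := le_max_right _ _
  have hn : N ≤ (h:ℤ) * r + 1 + (p:ℤ) * k := by
    have h1 : N - ((h:ℤ) * r + 1) ≤ k := le_max_left _ _
    have h2 : k ≤ (p:ℤ) * k := le_mul_of_one_le_left hk0 (by exact_mod_cast Nat.one_le_of_lt hp)
    linarith
  obtain ⟨f, hf, hs⟩ := hrep _ hn
  have hdvd : (p:ℤ) ∣ (∑ i, f i) - (h:ℤ) * r := by
    have he : (∑ i, f i) - (h:ℤ) * r = ∑ i, (f i - r) := by
      rw [Finset.sum_sub_distrib]; simp [mul_comm]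
    rw [he]
    exact Finset.dvd_sum fun i _ => hC _ (hf i)
  rw [hs] at hdvd
  have h1 : (p:ℤ) ∣ 1 := by
    have h2 : (p:ℤ) ∣ (p:ℤ) * k := Dvd.intro k rfl
    have h3 : (1:ℤ) = ((h:ℤ) * r + 1 + (p:ℤ) * k - (h:ℤ) * r) - (p:ℤ) * k := by ring
    rw [h3]
    exact dvd_sub hdvd h2
  have := Int.le_of_dvd one_pos h1
  omega


lemma cofinite_basis {A : Set ℤ} (hA : IsAdditiveBasis A) {F : Set ℤ} (hF : F.Finite)
    (hgcd : ∀ p : ℕ, p.Prime → ∃ a ∈ A \ F, ∃ b ∈ A \ F, ¬ (p:ℤ) ∣ a - b) :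
    IsAdditiveBasis (A \ F) := by
  classical
  set B := A \ F with hBdef
  obtain ⟨hneg, h, N, hrep⟩ := hA
  have hBneg : (B ∩ {x : ℤ | x < 0}).Finite :=
    hneg.subset (by intro z hz; exact ⟨hz.1.1, hz.2⟩)
  have hAinf : A.Infinite := rep_infinite hrep
  have hBinf : B.Infinite := hAinf.diff hF
  -- least element of B
  have hbdd : ∃ c : ℤ, ∀ z : ℤ, z ∈ B → c ≤ z := by
    obtain ⟨c, hc⟩ := hBneg.bddBelow
    refine ⟨min c 0, fun z hz => ?_⟩
    by_cases hz0 : z < 0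
    · exact le_trans (min_le_left _ _) (hc ⟨hz, hz0⟩)
    · exact le_trans (min_le_right _ _) (by omega)
  obtain ⟨b₀, hb₀B, hb₀min⟩ :=
    Int.exists_least_of_bdd (P := fun z => z ∈ B) hbdd hBinf.nonempty
  set G := (fun b => b - b₀) '' B with hGdef
  have hGnn : ∀ g ∈ G, 0 ≤ g := by
    rintro g ⟨b, hb, rfl⟩; simpa using hb₀min b hb
  have hG0 : (0:ℤ) ∈ G := ⟨b₀, hb₀B, sub_self _⟩
  have hGB : ∀ g ∈ G, g + b₀ ∈ B := by
    rintro g ⟨b, hb, rfl⟩; simpa using hb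
  -- closure of G is everything
  have hone : (1:ℤ) ∈ AddSubgroup.closure G := by
    obtain ⟨d, hd⟩ := Int.subgroup_cyclic (AddSubgroup.closure G)
    have hdvd : ∀ g ∈ G, d ∣ g := by
      intro g hg
      have hmem : g ∈ AddSubgroup.closure ({d} : Set ℤ) := by
        rw [← hd]; exact AddSubgroup.subset_closure hg
      refine AddSubgroup.closure_induction ?_ ?_ ?_ ?_ hmem
      · intro x hx; exact dvd_of_eq (Set.mem_singleton_iff.mp hx).symm
      · exact dvd_zero d
      · exact fun x y _ _ hx hy => dvd_add hx hy
      · exact fun x _ hx => dvd_neg.mpr hx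
    have hdiff : ∀ a ∈ B, ∀ b ∈ B, d ∣ a - b := by
      intro a ha b hb
      have h1 := hdvd _ ⟨a, ha, rfl⟩
      have h2 := hdvd _ ⟨b, hb, rfl⟩
      have : a - b = (a - b₀) - (b - b₀) := by ring
      rw [this]; exact dvd_sub h1 h2
    rcases Nat.lt_or_ge d.natAbs 2 with hlt | hge
    · rcases (by omega : d.natAbs = 0 ∨ d.natAbs = 1) with hd2 | hd2
      · -- d = 0 : B ⊆ {b₀}
        exfalso
        have hd0 : d = 0 := Int.natAbs_eq_zero.mp hd2
        apply hBinf
        apply (Set.finite_singleton b₀).subset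
        intro b hb
        have := hdvd _ ⟨b, hb, rfl⟩
        rw [hd0] at this
        have h0 : b - b₀ = 0 := by simpa using zero_dvd_iff.mp this
        simp only [Set.mem_singleton_iff]
        omega
      · -- d = ±1
        have : d = 1 ∨ d = -1 := Int.natAbs_eq_iff.mp hd2 |>.imp (by simp) (by simp)
        rw [hd]
        rcases this with rfl | rfl
        · exact AddSubgroup.subset_closure rfl
        · have : (1:ℤ) = -(-1) := by norm_num
          rw [this]
          exact AddSubgroup.neg_mem _ (AddSubgroup.subset_closure rfl)
    · exfalso
      obtain ⟨p, hp, hpd⟩ := Nat.exists_prime_and_dvd (n := d.natAbs) (by omega)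
      obtain ⟨a, ha, b, hb, hnd⟩ := hgcd p hp
      apply hnd
      have h1 : (p:ℤ) ∣ d := (Int.natCast_dvd_natCast.mpr hpd).trans (Int.natAbs_dvd.mpr dvd_rfl)
      exact h1.trans (hdiff a ha b hb)
  -- extract P, Q sums with P - Q = 1
  obtain ⟨Pv, Qv, tP, tQ, hPs, hQs, hPQ⟩ :
      ∃ Pv Qv tP tQ, InSum G tP Pv ∧ InSum G tQ Qv ∧ Pv - Qv = 1 := by
    refine AddSubgroup.closure_induction
      (p := fun x _ => ∃ Pv Qv tP tQ, InSum G tP Pv ∧ InSum G tQ Qv ∧ Pv - Qv = x)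
      ?_ ?_ ?_ ?_ hone
    · intro g hg
      exact ⟨g, 0, 1, 0, insum_single hg, insum_const_zero hG0 0, by ring⟩
    · exact ⟨0, 0, 0, 0, insum_const_zero hG0 0, insum_const_zero hG0 0, by ring⟩
    · rintro x y _ _ ⟨P1, Q1, t1, s1, hP1, hQ1, he1⟩ ⟨P2, Q2, t2, s2, hP2, hQ2, he2⟩
      exact ⟨P1 + P2, Q1 + Q2, t1 + t2, s1 + s2, insum_add hP1 hP2, insum_add hQ1 hQ2,
        by linarith⟩
    · rintro x _ ⟨P1, Q1, t1, s1, hP1, hQ1, he1⟩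
      exact ⟨Q1, P1, s1, t1, hQ1, hP1, by linarith⟩
  -- numerical semigroup: every v ≥ Qv^2 is a sum of elements of G
  have hQnn : 0 ≤ Qv := insum_nonneg hGnn hQs
  have semigrp : ∀ v : ℤ, Qv * Qv ≤ v → ∃ t, InSum G t v := by
    intro v hv
    rcases eq_or_lt_of_le hQnn with hQ0 | hQpos
    · -- Qv = 0, Pv = 1
      have hP1 : Pv = 1 := by omega
      have hv0 : 0 ≤ v := by nlinarith
      refine ⟨v.toNat * tP, ?_⟩
      have := insum_smul hPs v.toNat
      rwa [hP1, mul_one, Int.toNat_of_nonneg hv0] at this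
    · set q := v / Qv with hq
      set r := v % Qv with hr
      have hr0 : 0 ≤ r := Int.emod_nonneg v (by omega)
      have hrQ : r < Qv := Int.emod_lt_of_pos v hQpos
      have hqQ : Qv ≤ q := (Int.le_ediv_iff_mul_le hQpos).mpr hv
      have hrq : r ≤ q := by omega
      have hkey : v = (q - r) * Qv + r * Pv := by
        have h1 : Pv = Qv + 1 := by omega
        have h2 : Qv * q + r = v := Int.mul_ediv_add_emod v Qv
        rw [h1]; ring_nf; linarith [h2]
      refine ⟨(q - r).toNat * tQ + r.toNat * tP, ?_⟩
      have h1 := insum_smul hQs (q - r).toNat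
      have h2 := insum_smul hPs r.toNat
      rw [Int.toNat_of_nonneg (by omega : (0:ℤ) ≤ q - r)] at h1
      rw [Int.toNat_of_nonneg hr0] at h2
      have := insum_add h1 h2
      rwa [← hkey] at this
  -- bound over F
  have hCex : ∃ C : ℤ, 0 ≤ C ∧ ∀ f ∈ F, b₀ - f ≤ C := by
    obtain ⟨c, hc⟩ := (hF.image (fun f => b₀ - f)).bddAbove
    exact ⟨max c 0, le_max_right _ _, fun f hf =>
      le_trans (hc ⟨f, hf, rfl⟩) (le_max_left _ _)⟩
  obtain ⟨C, hC0, hCb⟩ := hCex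
  set σ := Qv * Qv + C with hσdef
  obtain ⟨tσ, hσ⟩ := semigrp σ (by omega)
  -- uniform count for F
  have hex : ∀ f ∈ F, ∃ t, InSum G t (f - b₀ + σ) := by
    intro f hf
    exact semigrp _ (by have := hCb f hf; omega)
  set tfun : ℤ → ℕ := fun f =>
    if hf : ∃ t, InSum G t (f - b₀ + σ) then hf.choose else 0 with htfun
  set T := hF.toFinset.sup tfun with hT
  have hexT : ∀ f ∈ F, InSum G T (f - b₀ + σ) := by
    intro f hf
    have hfe := hex f hf
    have h1 : InSum G (tfun f) (f - b₀ + σ) := by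
      rw [htfun]; simp only [hfe, dif_pos]; exact hfe.choose_spec
    exact insum_pad hG0 h1 (Finset.le_sup (by simpa using hf))
  set t := T + tσ + 1 with ht
  set δ := σ + ((t:ℤ) - 1) * b₀ with hδ
  have hrepl : ∀ a ∈ A, InSum B t (a + δ) := by
    intro a ha
    by_cases haF : a ∈ F
    · have h1 : InSum G t (a - b₀ + σ) := insum_pad hG0 (hexT a haF) (by omega)
      have h2 := insum_translate hGB h1
      have he : a - b₀ + σ + (t:ℤ) * b₀ = a + δ := by rw [hδ]; ring
      rwa [he] at h2
    · have haB : a ∈ B := ⟨ha, haF⟩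
      have h1 : InSum G (t - 1) σ := insum_pad hG0 hσ (by omega)
      have h2 := insum_translate hGB h1
      have he : σ + ((t - 1 : ℕ) : ℤ) * b₀ = δ := by
        rw [hδ]; congr 1; congr 1; push_cast [ht]; ring
      rw [he] at h2
      have h3 := insum_add (insum_single haB) h2
      have hc : 1 + (t - 1) = t := by omega
      rwa [hc] at h3
  -- h ≥ 1
  rcases Nat.eq_zero_or_pos h with rfl | hpos
  · exfalso
    obtain ⟨f1, _, hs1⟩ := hrep N le_rfl
    obtain ⟨f2, _, hs2⟩ := hrep (N + 1) (by omega)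
    simp at hs1 hs2
    omega
  refine ⟨hBneg, h * t, N + (h:ℤ) * δ, ?_⟩
  intro n hn
  obtain ⟨f, hfA, hsum⟩ := hrep (n - (h:ℤ) * δ) (by linarith)
  have h1 : ∀ i : Fin h, InSum B t (f i + δ) := fun i => hrepl _ (hfA i)
  have h2 := insum_sum (fun i : Fin h => f i + δ) h1
  have he : (∑ i : Fin h, (f i + δ)) = n := by
    rw [Finset.sum_add_distrib, hsum, Finset.sum_const, Finset.card_univ]
    simp
  rwa [he] at h2



lemma essential_prime {A P : Set ℤ} (hA : IsAdditiveBasis A) (hP : IsEssentialSubset A P) :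
    ∃ p : ℕ, p.Prime ∧ ∀ a ∈ A \ P, ∀ b ∈ A \ P, (p:ℤ) ∣ a - b := by
  by_contra hc
  push_neg at hc
  exact hP.1.2.1 (cofinite_basis hA hP.2 hc)

lemma no_share {A Pi Pj : Set ℤ} (hPi : IsEssentialSubset A Pi) {p : ℕ} (hp : p.Prime)
    (hdi : ∀ a ∈ A \ Pi, ∀ b ∈ A \ Pi, (p:ℤ) ∣ a - b)
    (hdj : ∀ a ∈ A \ Pj, ∀ b ∈ A \ Pj, (p:ℤ) ∣ a - b)
    {x : ℤ} (hx : x ∈ A \ Pi) (hx' : x ∈ A \ Pj)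
    {a : ℤ} (ha : a ∈ Pi) (ha' : a ∉ Pj) : False := by
  have hss : Pi \ {a} ⊂ Pi := Set.sdiff_singleton_ssubset.mpr ha
  have hbasis : IsAdditiveBasis (A \ (Pi \ {a})) := hPi.1.2.2 _ hss
  have hcong : ∀ c ∈ A \ (Pi \ {a}), (p:ℤ) ∣ c - x := by
    rintro c ⟨hcA, hc⟩
    by_cases hcPi : c ∈ Pi
    · have hca : c = a := by
        by_contra hne
        exact hc ⟨hcPi, hne⟩
      subst hca
      exact hdj c ⟨hPi.1.1 ha, ha'⟩ x hx'
    · exact hdi c ⟨hcA, hcPi⟩ x hx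
  exact not_rep_of_congruent hp.two_le hcong hbasis.2

set_option linter.unusedVariables false in
theorem Jxy_aux {I : Type*} (A : Set ℤ) (P : I → Set ℤ) (hA : IsAdditiveBasis A)
    (hI : Nonempty I) (hP : ∀ i, IsEssentialSubset A (P i))
    (hdist : ∀ i j : I, i ≠ j → P i ≠ P j) :
    ∀ x ∈ A, ∀ y ∈ A, x ≠ y →
      {i : I | x ∉ P i ∧ y ∉ P i}.Finite ∧
      {i : I | x ∉ P i ∧ y ∉ P i}.ncard ≤ (x - y).natAbs.primeFactors.card := by
  intro x hx y hy hxy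
  classical
  set J := {i : I | x ∉ P i ∧ y ∉ P i} with hJ
  have hpe : ∀ i, ∃ p : ℕ, p.Prime ∧ ∀ a ∈ A \ P i, ∀ b ∈ A \ P i, (p:ℤ) ∣ a - b :=
    fun i => essential_prime hA (hP i)
  choose p hpp hpd using hpe
  have hmaps : ∀ i ∈ J, p i ∈ (↑(x - y).natAbs.primeFactors : Set ℕ) := by
    intro i hi
    have hdvd : ((p i : ℤ)) ∣ x - y := hpd i x ⟨hx, hi.1⟩ y ⟨hy, hi.2⟩
    rw [Finset.mem_coe, Nat.mem_primeFactors]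
    refine ⟨hpp i, ?_, ?_⟩
    · rwa [← Int.natAbs_natCast (p i), Int.natAbs_dvd_natAbs]
    · intro h0
      apply hxy
      have := Int.natAbs_eq_zero.mp h0
      omega
  have hinj : Set.InjOn p J := by
    intro i hi j hj hij
    by_contra hne
    have hPne := hdist i j hne
    have hcases : (∃ a, a ∈ P i ∧ a ∉ P j) ∨ (∃ a, a ∈ P j ∧ a ∉ P i) := by
      by_contra hcon
      push_neg at hcon
      exact hPne (Set.eq_of_subset_of_subset (fun a ha => hcon.1 a ha)
        (fun a ha => hcon.2 a ha))
    rcases hcases with ⟨a, ha, ha'⟩ | ⟨a, ha, ha'⟩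
    · exact no_share (hP i) (hpp i) (hpd i) (hij ▸ hpd j) ⟨hx, hi.1⟩ ⟨hx, hj.1⟩ ha ha'
    · exact no_share (hP j) (hpp j) (hpd j) (hij ▸ hpd i) ⟨hx, hj.1⟩ ⟨hx, hi.1⟩ ha ha'
  have htfin : ((↑(x - y).natAbs.primeFactors : Set ℕ)).Finite := Finset.finite_toSet _
  have hJfin : J.Finite := by
    have himfin : (p '' J).Finite := htfin.subset (by rintro _ ⟨i, hi, rfl⟩; exact hmaps i hi)
    exact Set.Finite.of_finite_image himfin hinj
  refine ⟨hJfin, ?_⟩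
  have := Set.ncard_le_ncard_of_injOn p hmaps hinj htfin
  rwa [Set.ncard_coe_finset] at this

theorem Jxy_card_le_omega {I : Type*} (A : Set ℤ) (P : I → Set ℤ) (hA : IsAdditiveBasis A)
    (hI : Nonempty I) (hP : ∀ i, IsEssentialSubset A (P i))
    (hdist : ∀ i j : I, i ≠ j → P i ≠ P j) :
    ∀ x ∈ A, ∀ y ∈ A, x ≠ y →
      {i : I | x ∉ P i ∧ y ∉ P i}.Finite ∧
      {i : I | x ∉ P i ∧ y ∉ P i}.ncard ≤ (x - y).natAbs.primeFactors.card :=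
  Jxy_aux A P hA hI hP hdist
end

section
/- In the additive basis ℕ, the set {2k : k ∈ ℕ} of even natural numbers is an (infinite) essentiality of ℕ: the set of odd natural numbers is not an additive basis, but for every proper subset Q ⊊ {2k : k ∈ ℕ}, the set ℕ \ Q is an additive basis. -/
open scoped BigOperators

lemma all_odd_not_basis (A : Set ℤ) (hA : ∀ x ∈ A, x % 2 = 1) : ¬ IsAdditiveBasis A := by
  rintro ⟨-, h, N, hN⟩
  obtain ⟨f, hf, hsum⟩ := hN (2 * max N 0 + h + 1) (by
    have h1 := le_max_left N 0
    have h2 := le_max_right N 0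
    omega)
  have : (∑ i, f i) % 2 = (h : ℤ) % 2 := by
    rw [Finset.sum_int_mod]
    have : ∀ i ∈ (Finset.univ : Finset (Fin h)), f i % 2 = 1 := fun i _ => hA _ (hf i)
    rw [Finset.sum_congr rfl this]
    simp
  rw [hsum] at this
  omega

lemma basis_missing_even (Q : Set ℤ) (hQ : Q ⊆ {x : ℤ | ∃ k : ℕ, x = 2 * k})
    (m : ℕ) (hm : (2 * m : ℤ) ∉ Q) : IsAdditiveBasis ({x : ℤ | 0 ≤ x} \ Q) := by
  constructor
  · apply Set.Finite.subset (Set.finite_empty)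
    rintro x ⟨⟨hx, -⟩, hneg⟩
    simp only [Set.mem_setOf_eq] at hx hneg
    omega
  · have hodd : ∀ x : ℤ, 0 ≤ x → x % 2 = 1 → x ∈ {x : ℤ | 0 ≤ x} \ Q := by
      intro x hx hpar
      refine ⟨hx, fun hxQ => ?_⟩
      obtain ⟨k, hk⟩ := hQ hxQ
      omega
    refine ⟨2, 2 * m + 2, fun n hn => ?_⟩
    rcases Int.even_or_odd n with ⟨t, ht⟩ | ⟨t, ht⟩
    · refine ⟨![1, n - 1], fun i => ?_, by simp [Fin.sum_univ_two]⟩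
      fin_cases i
      · exact hodd 1 (by norm_num) (by norm_num)
      · exact hodd (n - 1) (by omega) (by omega)
    · refine ⟨![2 * m, n - 2 * m], fun i => ?_, by simp [Fin.sum_univ_two]⟩
      fin_cases i
      · exact ⟨show (0:ℤ) ≤ 2 * m by positivity, hm⟩
      · exact hodd (n - 2 * m) (by omega) (by omega)

theorem evens_essentiality_of_nat :
    IsEssentiality {x : ℤ | 0 ≤ x} {x : ℤ | ∃ k : ℕ, x = 2 * k} ∧
    ¬ IsAdditiveBasis {x : ℤ | ∃ k : ℕ, x = 2 * k + 1} ∧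
    ∀ Q : Set ℤ, Q ⊂ {x : ℤ | ∃ k : ℕ, x = 2 * k} →
      IsAdditiveBasis ({x : ℤ | 0 ≤ x} \ Q) := by
  have hmin : ∀ Q : Set ℤ, Q ⊂ {x : ℤ | ∃ k : ℕ, x = 2 * k} →
      IsAdditiveBasis ({x : ℤ | 0 ≤ x} \ Q) := by
    intro Q hQ
    obtain ⟨x, hxE, hxQ⟩ := Set.exists_of_ssubset hQ
    obtain ⟨m, rfl⟩ := hxE
    exact basis_missing_even Q hQ.subset m hxQ
  refine ⟨⟨?_, ?_, hmin⟩, ?_, hmin⟩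
  · rintro x ⟨k, rfl⟩
    show (0:ℤ) ≤ 2 * k
    positivity
  · apply all_odd_not_basis
    rintro x ⟨hx, hnE⟩
    simp only [Set.mem_setOf_eq] at hx hnE
    rcases Int.even_or_odd x with ⟨t, ht⟩ | ⟨t, ht⟩
    · exact absurd ⟨t.toNat, by omega⟩ hnE
    · omega
  · apply all_odd_not_basis
    rintro x ⟨k, rfl⟩
    omega
end

section
/- In the additive basis ℕ, the set {2k + 1 : k ∈ ℕ} of odd natural numbers is an (infinite) essentiality of ℕ: the set of even natural numbers is not an additive basis, but for every proper subset Q ⊊ {2k + 1 : k ∈ ℕ}, the set ℕ \ Q is an additive basis. -/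
open scoped BigOperators

lemma mem_diff_of_even_aux {Q : Set ℤ} (hQ : Q ⊆ {x : ℤ | ∃ k : ℕ, x = 2 * k + 1})
    (x : ℤ) (hx : 0 ≤ x) (hev : Even x) : x ∈ {x : ℤ | 0 ≤ x} \ Q := by
  refine ⟨hx, fun hxQ => ?_⟩
  obtain ⟨j, hj⟩ := hQ hxQ
  obtain ⟨r, hr⟩ := hev
  omega

lemma evens_not_basis_aux : ¬ IsAdditiveBasis {x : ℤ | ∃ k : ℕ, x = 2 * k} := by
  rintro ⟨-, h, N, hN⟩
  obtain ⟨f, hf, hsum⟩ := hN (2 * (max N 0) + 1) (by omega)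
  have hev : Even (∑ i, f i) := by
    apply Finset.even_sum
    intro i _
    obtain ⟨k, hk⟩ := hf i
    exact ⟨k, by omega⟩
  obtain ⟨r, hr⟩ := hev
  omega

lemma basis_of_proper_aux (Q : Set ℤ) (hQ : Q ⊂ {x : ℤ | ∃ k : ℕ, x = 2 * k + 1}) :
    IsAdditiveBasis ({x : ℤ | 0 ≤ x} \ Q) := by
  obtain ⟨m, hmP, hmQ⟩ := Set.exists_of_ssubset hQ
  obtain ⟨k, hk⟩ := hmP
  constructor
  · apply Set.Finite.subset Set.finite_empty
    rintro x ⟨⟨hx, -⟩, hneg⟩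
    exact absurd hx (by simpa using hneg)
  · refine ⟨2, m, fun n hn => ?_⟩
    rcases Int.even_or_odd n with he | ho
    · have h1 : n ∈ {x : ℤ | 0 ≤ x} \ Q := mem_diff_of_even_aux hQ.1 n (by omega) he
      have h2 : (0 : ℤ) ∈ {x : ℤ | 0 ≤ x} \ Q := mem_diff_of_even_aux hQ.1 0 le_rfl Even.zero
      refine ⟨![n, 0], ?_, by simp [Fin.sum_univ_two]⟩
      intro i
      fin_cases i
      exacts [h1, h2]
    · obtain ⟨s, hs⟩ := ho
      have h1 : m ∈ {x : ℤ | 0 ≤ x} \ Q := ⟨show (0 : ℤ) ≤ m by omega, hmQ⟩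
      have h2 : n - m ∈ {x : ℤ | 0 ≤ x} \ Q :=
        mem_diff_of_even_aux hQ.1 (n - m) (by omega) ⟨s - k, by omega⟩
      refine ⟨![m, n - m], ?_, by simp [Fin.sum_univ_two]⟩
      intro i
      fin_cases i
      exacts [h1, h2]

lemma diff_odds_eq : {x : ℤ | 0 ≤ x} \ {x : ℤ | ∃ k : ℕ, x = 2 * k + 1}
    = {x : ℤ | ∃ k : ℕ, x = 2 * k} := by
  ext x
  simp only [Set.mem_diff, Set.mem_setOf_eq]
  constructor
  · rintro ⟨hx, hodd⟩
    rcases Int.even_or_odd x with ⟨r, hr⟩ | ⟨r, hr⟩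
    · exact ⟨r.toNat, by omega⟩
    · exact absurd ⟨r.toNat, by omega⟩ hodd
  · rintro ⟨k, rfl⟩
    exact ⟨by positivity, fun ⟨j, hj⟩ => by omega⟩

theorem odds_essentiality_of_nat :
    IsEssentiality {x : ℤ | 0 ≤ x} {x : ℤ | ∃ k : ℕ, x = 2 * k + 1} ∧
    ¬ IsAdditiveBasis {x : ℤ | ∃ k : ℕ, x = 2 * k} ∧
    ∀ Q : Set ℤ, Q ⊂ {x : ℤ | ∃ k : ℕ, x = 2 * k + 1} →
      IsAdditiveBasis ({x : ℤ | 0 ≤ x} \ Q) := by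
  refine ⟨⟨?_, ?_, basis_of_proper_aux⟩, evens_not_basis_aux, basis_of_proper_aux⟩
  · rintro x ⟨k, rfl⟩
    simp only [Set.mem_setOf_eq]; positivity
  · rw [diff_odds_eq]; exact evens_not_basis_aux
end

section
/- For every prime number p, the set ℕ \ {pk : k ∈ ℕ} is an essentiality of the additive basis ℕ; consequently, ℕ has infinitely many essentialities. -/
open scoped BigOperators

lemma sum_repr (p jn : ℕ) (hj : jn < p) (x c : ℤ) :
    (∑ i : Fin p, (if (i : ℕ) < jn then x else if (i : ℕ) = jn then c else 0))
      = jn * x + c := by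
  rw [Fin.sum_univ_eq_sum_range (fun i => if i < jn then x else if i = jn then c else 0)]
  have hsplit : ∀ i, (if i < jn then x else if i = jn then c else 0)
      = (if i < jn then x else 0) + (if i = jn then c else 0) := by
    intro i
    split_ifs <;> first | (exfalso; omega) | ring
  simp only [hsplit]
  rw [Finset.sum_add_distrib]
  have h1 : (∑ i ∈ Finset.range p, if i < jn then x else 0) = jn * x := by
    rw [Finset.sum_ite, Finset.sum_const, Finset.sum_const]
    have : (Finset.range p).filter (· < jn) = Finset.range jn := by
      ext i; simp [Finset.mem_range]; omega
    simp [this, nsmul_eq_mul]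
  have h2 : (∑ i ∈ Finset.range p, if i = jn then c else 0) = c := by
    rw [Finset.sum_ite_eq' (Finset.range p) jn (fun _ => c)]
    simp [Finset.mem_range, hj]
  rw [h1, h2]

lemma main_ess (p : ℕ) (hp : p.Prime) :
    IsEssentiality {x : ℤ | 0 ≤ x}
      ({x : ℤ | 0 ≤ x} \ {x : ℤ | ∃ k : ℕ, x = (p : ℤ) * k}) := by
  have hp0 : (0 : ℤ) < p := by exact_mod_cast hp.pos
  refine ⟨Set.diff_subset, ?_, ?_⟩
  · rintro ⟨-, h, N, hN⟩
    have key : ∀ n : ℤ, N ≤ n → (p : ℤ) ∣ n := by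
      intro n hn
      obtain ⟨f, hf, hsum⟩ := hN n hn
      rw [← hsum]
      refine Finset.dvd_sum fun i _ => ?_
      have hfi := hf i
      simp only [Set.mem_diff, Set.mem_setOf_eq] at hfi
      push_neg at hfi
      obtain ⟨k, hk⟩ := hfi.2 hfi.1
      exact ⟨k, hk⟩
    have h1 := key (max N 0) (le_max_left _ _)
    have h2 := key (max N 0 + 1) (by linarith [le_max_left N 0])
    have hd : (p : ℤ) ∣ 1 := by
      have := dvd_sub h2 h1
      simpa using this
    have hpd : p ∣ 1 := by exact_mod_cast hd
    exact hp.ne_one (Nat.dvd_one.mp hpd)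
  · intro Q hQ
    obtain ⟨x, hxP, hxQ⟩ := Set.exists_of_ssubset hQ
    have hQP := hQ.1
    simp only [Set.mem_diff, Set.mem_setOf_eq, not_exists] at hxP
    obtain ⟨hx0, hxM⟩ := hxP
    have hpx : ¬ (p : ℤ) ∣ x := by
      rintro ⟨c, hc⟩
      have hc0 : 0 ≤ c := by nlinarith
      exact hxM c.toNat (by rw [hc, Int.toNat_of_nonneg hc0])
    have hcop : IsCoprime (p : ℤ) x := (Nat.prime_iff_prime_int.mp hp).coprime_iff_not_dvd.mpr hpx
    obtain ⟨u, v, huv⟩ := hcop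
    constructor
    · refine Set.Finite.subset Set.finite_empty ?_
      rintro y ⟨⟨hy, -⟩, hy'⟩
      simp only [Set.mem_setOf_eq] at hy hy'
      exact absurd hy (not_le.mpr hy')
    · refine ⟨p, (p : ℤ) * x, fun n hn => ?_⟩
      set j : ℤ := (n * v) % p with hjdef
      have hj0 : 0 ≤ j := Int.emod_nonneg _ (by positivity)
      have hjp : j < p := Int.emod_lt_of_pos _ hp0
      set q : ℤ := (n * v) / p with hqdef
      set m : ℤ := n * u + q * x with hmdef
      have hkey : n = j * x + p * m := by
        have hj' : j = n * v - p * q := by rw [hjdef, hqdef, Int.emod_def]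
        rw [hj', hmdef]
        ring_nf
        linear_combination (-n) * huv
      have hm0 : 0 ≤ m := by
        have hjx : j * x ≤ p * x := mul_le_mul_of_nonneg_right hjp.le hx0
        nlinarith
      set jn : ℕ := j.toNat with hjn
      have hjcast : (jn : ℤ) = j := Int.toNat_of_nonneg hj0
      have hjnp : jn < p := by omega
      refine ⟨fun i => if (i : ℕ) < jn then x else if (i : ℕ) = jn then (p : ℤ) * m else 0,
        ?_, ?_⟩
      · intro i
        dsimp only
        have hmem : ∀ y : ℤ, (∃ k : ℕ, y = (p : ℤ) * k) → 0 ≤ y →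
            y ∈ {x : ℤ | 0 ≤ x} \ Q := by
          intro y hy hy0
          refine ⟨hy0, fun hyQ => ?_⟩
          have := hQP hyQ
          simp only [Set.mem_diff, Set.mem_setOf_eq, not_exists] at this
          obtain ⟨k, hk⟩ := hy
          exact this.2 k hk
        split_ifs
        · exact ⟨hx0, hxQ⟩
        · exact hmem _ ⟨m.toNat, by rw [Int.toNat_of_nonneg hm0]⟩ (by positivity)
        · exact hmem 0 ⟨0, by simp⟩ le_rfl
      · rw [sum_repr p jn hjnp x ((p : ℤ) * m), hjcast, ← hkey]

theorem nat_has_infinitely_many_essentialities :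
    (∀ p : ℕ, p.Prime →
      IsEssentiality {x : ℤ | 0 ≤ x}
        ({x : ℤ | 0 ≤ x} \ {x : ℤ | ∃ k : ℕ, x = (p : ℤ) * k})) ∧
    {P : Set ℤ | IsEssentiality {x : ℤ | 0 ≤ x} P}.Infinite := by
  constructor
  · exact main_ess
  · have hsub : (fun p : ℕ => {x : ℤ | 0 ≤ x} \ {x : ℤ | ∃ k : ℕ, x = (p : ℤ) * k}) ''
        {p : ℕ | p.Prime} ⊆ {P : Set ℤ | IsEssentiality {x : ℤ | 0 ≤ x} P} := by
      rintro _ ⟨p, hp, rfl⟩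
      exact main_ess p hp
    have hinj : Set.InjOn
        (fun p : ℕ => {x : ℤ | 0 ≤ x} \ {x : ℤ | ∃ k : ℕ, x = (p : ℤ) * k})
        {p : ℕ | p.Prime} := by
      intro p hp q hq hpq
      by_contra hne
      have hq0 : ((q : ℤ)) ∈ {x : ℤ | 0 ≤ x} \ {x : ℤ | ∃ k : ℕ, x = (p : ℤ) * k} := by
        refine ⟨by simp, ?_⟩
        rintro ⟨k, hk⟩
        have : q = p * k := by exact_mod_cast hk
        have hdvd : p ∣ q := ⟨k, this⟩
        exact hne ((Nat.prime_dvd_prime_iff_eq hp hq).mp hdvd)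
      simp only [] at hpq
      rw [hpq] at hq0
      exact hq0.2 ⟨1, by simp⟩
    exact Set.Infinite.mono hsub (Set.Infinite.image hinj Nat.infinite_setOf_prime)
end

section
/- Let A be an additive basis, let P₁ and P₂ be essentialities of A with P₁ ∪ P₂ ≠ A, and suppose there exists an integer d ≥ 2 dividing both d(P₁) and d(P₂). Then P₁ = P₂. -/
open scoped BigOperators

lemma dP_dvd (A P : Set ℤ) {x y : ℤ} (hx : x ∈ A \ P) (hy : y ∈ A \ P) :
    (dP A P : ℤ) ∣ x - y := by
  have hz : x - y ∈ Ideal.span {z : ℤ | ∃ x ∈ A \ P, ∃ y ∈ A \ P, z = x - y} :=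
    Ideal.subset_span ⟨x, hx, y, hy, rfl⟩
  rw [Submodule.IsPrincipal.mem_iff_generator_dvd] at hz
  unfold dP setGcd
  rw [Int.natCast_natAbs]
  exact (abs_dvd _ _).2 hz

lemma not_basis_of_congr {B : Set ℤ} {a d : ℤ} (hd : 2 ≤ d)
    (hcong : ∀ x ∈ B, d ∣ x - a) : ¬ IsAdditiveBasis B := by
  rintro ⟨-, h, N, hrep⟩
  have key : ∀ n : ℤ, N ≤ n → d ∣ n - h * a := by
    intro n hn
    obtain ⟨f, hf, hsum⟩ := hrep n hn
    have : d ∣ ∑ i, (f i - a) := Finset.dvd_sum fun i _ => hcong _ (hf i)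
    have e : ∑ i : Fin h, (f i - a) = n - h * a := by
      rw [Finset.sum_sub_distrib, hsum, Finset.sum_const, Finset.card_univ,
        Fintype.card_fin, nsmul_eq_mul]
    rwa [e] at this
  have h1 := key N le_rfl
  have h2 := key (N + 1) (by linarith)
  have : d ∣ 1 := by
    have := dvd_sub h2 h1
    simpa using this
  have := Int.le_of_dvd one_pos this
  linarith

theorem eq_of_common_divisor_of_dP (A P₁ P₂ : Set ℤ) (hA : IsAdditiveBasis A)
    (h₁ : IsEssentiality A P₁) (h₂ : IsEssentiality A P₂) (hcover : P₁ ∪ P₂ ≠ A)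
    (hdvd : ∃ d : ℤ, 2 ≤ d ∧ d ∣ (dP A P₁ : ℤ) ∧ d ∣ (dP A P₂ : ℤ)) :
    P₁ = P₂ := by
  obtain ⟨d, hd2, hdP1, hdP2⟩ := hdvd
  by_contra hne
  -- get a point of A outside P₁ ∪ P₂
  have hsub : P₁ ∪ P₂ ⊆ A := Set.union_subset h₁.1 h₂.1
  obtain ⟨a, haA, haP⟩ := Set.exists_of_ssubset (hsub.ssubset_of_ne hcover)
  have haP1 : a ∈ A \ P₁ := ⟨haA, fun h => haP (Or.inl h)⟩
  have haP2 : a ∈ A \ P₂ := ⟨haA, fun h => haP (Or.inr h)⟩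
  -- rule out inclusion cases
  rcases eq_or_ssubset_of_subset (Set.inter_subset_left (s := P₁) (t := P₂)) with heq | hss
  · -- P₁ ∩ P₂ = P₁, i.e. P₁ ⊆ P₂, hence P₁ ⊊ P₂
    have hsub12 : P₁ ⊆ P₂ := Set.inter_eq_left.mp heq
    exact h₁.2.1 (h₂.2.2 P₁ ⟨hsub12, fun h => hne (Set.Subset.antisymm hsub12 h)⟩)
  · have hB : IsAdditiveBasis (A \ (P₁ ∩ P₂)) := h₁.2.2 _ hss
    refine not_basis_of_congr (a := a) hd2 (fun x hx => ?_) hB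
    rcases Classical.em (x ∈ P₁) with hx1 | hx1
    · have hx2 : x ∈ A \ P₂ := ⟨hx.1, fun h => hx.2 ⟨hx1, h⟩⟩
      exact dvd_trans hdP2 (dP_dvd A P₂ hx2 haP2)
    · exact dvd_trans hdP1 (dP_dvd A P₁ ⟨hx.1, hx1⟩ haP1)
end
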